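/- arXiv:2204.11235 — 5 statements merged into one kernel-verified Lean document; each statement's English description precedes it below -/
import Mathlib

section
/- If a partial function f : A^ω ⇀ B^ω is deterministic regular, then its domain dom f is a Büchi deterministic language. -/
/-- `u` is a prefix of the infinite word `y`. -/
def PrefixOf {B : Type} (u : List B) (y : ℕ → B) : Prop :=
  ∀ (i : ℕ) (h : i < u.length), u.get ⟨i, h⟩ = y i

/-- Concatenation of a finite word and an infinite word. -/
def listPrepend {B : Type} (u : List B) (y : ℕ → B) : ℕ → B :=
  fun i => if h : i < u.length then u.get ⟨i, h⟩ else y (i - u.length)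

/-- The finite word `v` repeated `n` times. -/
def powList {B : Type} (v : List B) (n : ℕ) : List B :=
  (List.replicate n v).flatten

/-- The infinite word `y` equals `u · v^ω` (meaningful when `v ≠ []`). -/
def EqUVomega {B : Type} (u v : List B) (y : ℕ → B) : Prop :=
  ∀ n : ℕ, PrefixOf (u ++ powList v n) y

/-- A deterministic two-way transducer (2-dT). `step q (none)` is the behavior on the
left endmarker `⊢`; the `Bool` is `true` for a right move `▷` and `false` for `◁`;
the list is the output of the transition. -/
structure TDT (A B : Type) where
  Q : Type
  fin : Fintype Q
  q0 : Q
  step : Q → Option A → Option (Q × Bool × List B)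

attribute [instance] TDT.fin

/-- The tape `⊢x`: position `0` carries the endmarker, position `i+1` carries `x i`. -/
def tape {A : Type} (x : ℕ → A) : ℕ → Option A :=
  fun i => if i = 0 then none else some (x (i - 1))

namespace TDT

variable {A B : Type}

/-- An infinite run of the 2-dT on `x`, as a sequence of configurations. -/
def IsRun (T : TDT A B) (x : ℕ → A) (c : ℕ → T.Q × ℕ) : Prop :=
  c 0 = (T.q0, 0) ∧
  ∀ n : ℕ, ∃ q' dir w, T.step (c n).1 (tape x (c n).2) = some (q', dir, w) ∧
    (c (n + 1)).1 = q' ∧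
    ((dir = true ∧ (c (n + 1)).2 = (c n).2 + 1) ∨
     (dir = false ∧ (c n).2 = (c (n + 1)).2 + 1))

/-- Accepting run: the positions tend to infinity. -/
def AcceptingRun (T : TDT A B) (x : ℕ → A) (c : ℕ → T.Q × ℕ) : Prop :=
  T.IsRun x c ∧ ∀ m : ℕ, ∃ N : ℕ, ∀ n : ℕ, N ≤ n → m ≤ (c n).2

/-- Output produced by the `n`-th transition of the run. -/
def outAt (T : TDT A B) (x : ℕ → A) (c : ℕ → T.Q × ℕ) (n : ℕ) : List B :=
  match T.step (c n).1 (tape x (c n).2) with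
  | some (_, _, w) => w
  | none => []

/-- Output along the first `n` transitions of the run. -/
def outPrefix (T : TDT A B) (x : ℕ → A) (c : ℕ → T.Q × ℕ) (n : ℕ) : List B :=
  ((List.range n).map (T.outAt x c)).flatten

/-- The partial function computed by a 2-dT. -/
def Computes (T : TDT A B) (f : (ℕ → A) → Option (ℕ → B)) : Prop :=
  ∀ x y, f x = some y ↔ ∃ c, T.AcceptingRun x c ∧
    (∀ m : ℕ, ∃ n : ℕ, m ≤ (T.outPrefix x c n).length) ∧
    (∀ n : ℕ, PrefixOf (T.outPrefix x c n) y)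

end TDT

/-- A partial function is deterministic regular if some 2-dT computes it. -/
def DetRegular {A B : Type} (f : (ℕ → A) → Option (ℕ → B)) : Prop :=
  ∃ T : TDT A B, T.Computes f

/-- A deterministic Büchi automaton (with partial transition function). -/
structure DBA (A : Type) where
  Q : Type
  fin : Fintype Q
  q0 : Q
  δ : Q → A → Option Q
  F : Set Q

attribute [instance] DBA.fin

namespace DBA

variable {A : Type}

/-- The (partial) run of the automaton on `x`. -/
def runAt (D : DBA A) (x : ℕ → A) : ℕ → Option D.Q
  | 0 => some D.q0
  | n + 1 => (DBA.runAt D x n).bind fun q => D.δ q (x n)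

/-- The run on `x` is everywhere defined and visits `F` infinitely often. -/
def Accepts (D : DBA A) (x : ℕ → A) : Prop :=
  ∀ i : ℕ, ∃ j : ℕ, i ≤ j ∧ ∃ q, D.runAt x j = some q ∧ q ∈ D.F

end DBA

/-- A language of infinite words is Büchi deterministic. -/
def BuchiDet {A : Type} (L : Set (ℕ → A)) : Prop :=
  ∃ D : DBA A, ∀ x, x ∈ L ↔ D.Accepts x

noncomputable section Dev
open Classical

namespace TDT

variable {A B : Type} (T : TDT A B)

/-- One deterministic step on configurations. -/
def stepConf (x : ℕ → A) (p : T.Q × ℕ) : Option (T.Q × ℕ) :=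
  match T.step p.1 (tape x p.2) with
  | none => none
  | some (q', d, _) =>
      if d then some (q', p.2 + 1)
      else match p.2 with
        | 0 => none
        | i + 1 => some (q', i)

def outConf (x : ℕ → A) (p : T.Q × ℕ) : List B :=
  match T.step p.1 (tape x p.2) with
  | none => []
  | some (_, _, w) => w

def iterFrom (x : ℕ → A) (p : T.Q × ℕ) : ℕ → Option (T.Q × ℕ)
  | 0 => some p
  | n + 1 => (iterFrom x p n).bind (T.stepConf x)

variable {T} {x : ℕ → A}

lemma iterFrom_add (p : T.Q × ℕ) (m n : ℕ) :
    T.iterFrom x p (m + n) = (T.iterFrom x p m).bind (fun p' => T.iterFrom x p' n) := by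
  induction n with
  | zero => cases h : T.iterFrom x p m <;> simp [iterFrom, h]
  | succ n ih =>
      show T.iterFrom x p (m + n + 1) = _
      rw [iterFrom, ih]
      cases h : T.iterFrom x p m <;> simp [iterFrom]

lemma iterFrom_le_isSome {p : T.Q × ℕ} {m n : ℕ} (h : m ≤ n)
    (hn : (T.iterFrom x p n).isSome) : (T.iterFrom x p m).isSome := by
  obtain ⟨d, rfl⟩ := Nat.exists_eq_add_of_le h
  rw [iterFrom_add] at hn
  cases h' : T.iterFrom x p m
  · rw [h'] at hn; simp at hn
  · simp

lemma stepConf_pos {p p' : T.Q × ℕ} (h : T.stepConf x p = some p') :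
    p'.2 = p.2 + 1 ∨ p.2 = p'.2 + 1 := by
  unfold stepConf at h
  rcases hs : T.step p.1 (tape x p.2) with _ | ⟨q', d, w⟩ <;> rw [hs] at h
  · simp at h
  · by_cases hd : d
    · simp [hd] at h; left; rw [← h]
    · rcases hp : p.2 with _ | i <;> simp [hd, hp] at h
      right; rw [← h]

/-- Characterization of `IsRun` via `stepConf`. -/
lemma isRun_iff {c : ℕ → T.Q × ℕ} :
    T.IsRun x c ↔ c 0 = (T.q0, 0) ∧ ∀ n, T.stepConf x (c n) = some (c (n + 1)) := by
  constructor
  · rintro ⟨h0, hs⟩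
    refine ⟨h0, fun n => ?_⟩
    obtain ⟨q', dir, w, hstep, hq, hdir⟩ := hs n
    unfold stepConf
    rw [hstep]
    rcases hdir with ⟨hd, hpos⟩ | ⟨hd, hpos⟩
    · subst hd; simp only [if_true]
      rw [← hq, ← hpos]
    · subst hd; simp only [Bool.false_eq_true, if_false]
      rw [hpos]
      simp only []
      rw [← hq]
  · rintro ⟨h0, hs⟩
    refine ⟨h0, fun n => ?_⟩
    have h := hs n
    unfold stepConf at h
    rcases hstep : T.step (c n).1 (tape x (c n).2) with _ | ⟨q', d, w⟩ <;> rw [hstep] at h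
    · simp at h
    · refine ⟨q', d, w, rfl, ?_, ?_⟩
      · by_cases hd : d
        · simp [hd] at h; rw [← h]
        · rcases hp : (c n).2 with _ | i <;> simp [hd, hp] at h
          rw [← h]
      · by_cases hd : d
        · simp [hd] at h; subst hd; left; exact ⟨rfl, by rw [← h]⟩
        · rcases hp : (c n).2 with _ | i <;> simp [hd, hp] at h
          simp only [Bool.not_eq_true] at hd; subst hd
          right; exact ⟨rfl, by rw [← h]⟩


/-- There is output strictly before time `m` of the run from `p`. -/
def OutBefore (T : TDT A B) (x : ℕ → A) (p : T.Q × ℕ) (m : ℕ) : Prop :=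
  ∃ t pt, t < m ∧ T.iterFrom x p t = some pt ∧ T.outConf x pt ≠ []

/-- Semantic crossing: starting from `p`, the run first reaches position `p.2 + 1`
in state `q'`; `b` records whether some output was produced on the way. -/
def CrossSem (T : TDT A B) (x : ℕ → A) (p : T.Q × ℕ) (q' : T.Q) (b : Bool) : Prop :=
  ∃ m, T.iterFrom x p m = some (q', p.2 + 1) ∧
    (∀ t < m, ∀ pt, T.iterFrom x p t = some pt → pt.2 ≤ p.2) ∧
    (b = true ↔ T.OutBefore x p m)

lemma crossSem_unique {p : T.Q × ℕ} {q1 q2 : T.Q} {b1 b2 : Bool}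
    (h1 : T.CrossSem x p q1 b1) (h2 : T.CrossSem x p q2 b2) : q1 = q2 ∧ b1 = b2 := by
  obtain ⟨m1, hit1, stay1, flag1⟩ := h1
  obtain ⟨m2, hit2, stay2, flag2⟩ := h2
  have hm : m1 = m2 := by
    by_contra hne
    rcases Nat.lt_or_ge m1 m2 with h | h
    · have := stay2 m1 h _ hit1; omega
    · have hlt : m2 < m1 := by omega
      have := stay1 m2 hlt _ hit2; omega
  subst hm
  rw [hit1] at hit2
  have hq : q1 = q2 := by
    have := Option.some.inj hit2
    exact congrArg Prod.fst this
  refine ⟨hq, ?_⟩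
  have : (b1 = true) ↔ (b2 = true) := by rw [flag1, flag2]
  cases b1 <;> cases b2 <;> simp_all

/-- The semantic crossing table at position `i`. -/
def crossOpt (T : TDT A B) (x : ℕ → A) (i : ℕ) (q : T.Q) : Option (T.Q × Bool) :=
  if h : ∃ r : T.Q × Bool, T.CrossSem x (q, i) r.1 r.2 then some h.choose else none

lemma crossOpt_eq_some {i : ℕ} {q q' : T.Q} {b : Bool} :
    T.crossOpt x i q = some (q', b) ↔ T.CrossSem x (q, i) q' b := by
  unfold crossOpt
  constructor
  · intro h
    split_ifs at h with hex
    · have hc := hex.choose_spec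
      have heq := Option.some.inj h
      rw [heq] at hc
      exact hc
  · intro h
    have hex : ∃ r : T.Q × Bool, T.CrossSem x (q, i) r.1 r.2 := ⟨(q', b), h⟩
    rw [dif_pos hex]
    have hc := hex.choose_spec
    have := T.crossSem_unique (x := x) hc h
    congr 1
    exact Prod.ext this.1 this.2

/-- Syntactic crossing relation, given a table `τ` for the cell to the left. -/
inductive Cross (T : TDT A B) (τ : T.Q → Option (T.Q × Bool)) (a : Option A) :
    T.Q → T.Q × Bool → Prop
  | rgt {q q' : T.Q} {w : List B} (h : T.step q a = some (q', true, w)) :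
      Cross T τ a q (q', !w.isEmpty)
  | lft {q q2 q3 : T.Q} {b3 : Bool} {w : List B} {r : T.Q × Bool}
      (h : T.step q a = some (q2, false, w)) (hτ : τ q2 = some (q3, b3))
      (hc : Cross T τ a q3 r) :
      Cross T τ a q (r.1, !w.isEmpty || b3 || r.2)

lemma cross_unique {τ : T.Q → Option (T.Q × Bool)} {a : Option A} {q : T.Q}
    {r1 r2 : T.Q × Bool} (h1 : T.Cross τ a q r1) (h2 : T.Cross τ a q r2) : r1 = r2 := by
  induction h1 generalizing r2 with
  | rgt h =>
      cases h2 with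
      | rgt h' => rw [h] at h'; cases h'; rfl
      | lft h' _ _ => rw [h] at h'; simp at h'
  | lft h hτ hc ih =>
      cases h2 with
      | rgt h' => rw [h] at h'; simp at h'
      | lft h' hτ' hc' =>
          rw [h] at h'
          simp only [Option.some.injEq, Prod.mk.injEq] at h'
          obtain ⟨hq2, -, hw⟩ := h'
          subst hq2
          rw [hτ] at hτ'
          simp only [Option.some.injEq, Prod.mk.injEq] at hτ'
          obtain ⟨hq3, hb3⟩ := hτ'
          subst hq3; subst hb3; subst hw
          rw [ih hc']

lemma tape_succ (x : ℕ → A) (n : ℕ) : tape x (n + 1) = some (x n) := by simp [tape]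

lemma iterFrom_one (p : T.Q × ℕ) : T.iterFrom x p 1 = T.stepConf x p := by
  simp [iterFrom]

lemma iterFrom_shift {p p1 : T.Q × ℕ} {k : ℕ} (hk : T.iterFrom x p k = some p1) (t : ℕ) :
    T.iterFrom x p (k + t) = T.iterFrom x p1 t := by
  rw [iterFrom_add, hk]; rfl

lemma stepConf_right {q q' : T.Q} {i : ℕ} {w : List B}
    (hs : T.step q (tape x i) = some (q', true, w)) :
    T.stepConf x (q, i) = some (q', i + 1) := by
  simp [stepConf, hs]

lemma stepConf_left {q q' : T.Q} {j : ℕ} {w : List B}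
    (hs : T.step q (tape x (j + 1)) = some (q', false, w)) :
    T.stepConf x (q, j + 1) = some (q', j) := by
  simp [stepConf, hs]

lemma stepConf_left0 {q q' : T.Q} {w : List B}
    (hs : T.step q (tape x 0) = some (q', false, w)) :
    T.stepConf x (q, 0) = none := by
  simp [stepConf, hs]

lemma stepConf_none {q : T.Q} {i : ℕ}
    (hs : T.step q (tape x i) = none) :
    T.stepConf x (q, i) = none := by
  simp [stepConf, hs]

lemma outConf_eq {q q' : T.Q} {i : ℕ} {d : Bool} {w : List B}
    (hs : T.step q (tape x i) = some (q', d, w)) :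
    T.outConf x (q, i) = w := by
  simp [outConf, hs]

lemma outBefore_one {p : T.Q × ℕ} : T.OutBefore x p 1 ↔ T.outConf x p ≠ [] := by
  constructor
  · rintro ⟨t, pt, ht, hi, ho⟩
    interval_cases t
    simp only [iterFrom, Option.some.injEq] at hi
    rwa [← hi] at ho
  · intro h
    exact ⟨0, p, Nat.zero_lt_one, rfl, h⟩

lemma outBefore_split {p p1 : T.Q × ℕ} {k : ℕ}
    (hk : T.iterFrom x p k = some p1) (n : ℕ) :
    T.OutBefore x p (k + n) ↔ T.OutBefore x p k ∨ T.OutBefore x p1 n := by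
  constructor
  · rintro ⟨t, pt, ht, hi, ho⟩
    rcases Nat.lt_or_ge t k with h | h
    · exact Or.inl ⟨t, pt, h, hi, ho⟩
    · obtain ⟨u, rfl⟩ := Nat.exists_eq_add_of_le h
      rw [iterFrom_shift hk] at hi
      exact Or.inr ⟨u, pt, by omega, hi, ho⟩
  · rintro (⟨t, pt, ht, hi, ho⟩ | ⟨t, pt, ht, hi, ho⟩)
    · exact ⟨t, pt, by omega, hi, ho⟩
    · exact ⟨k + t, pt, by omega, by rw [iterFrom_shift hk]; exact hi, ho⟩

/-- A `Cross` derivation implies a semantic crossing. -/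
lemma cross_to_crossSem {τ : T.Q → Option (T.Q × Bool)} {i : ℕ} {q : T.Q} {r : T.Q × Bool}
    (H : ∀ q2, τ q2 = match i with | 0 => none | j + 1 => T.crossOpt x j q2)
    (hc : T.Cross τ (tape x i) q r) : T.CrossSem x (q, i) r.1 r.2 := by
  induction hc with
  | @rgt q q' w h =>
      refine ⟨1, ?_, ?_, ?_⟩
      · rw [iterFrom_one, stepConf_right h]
      · intro t ht pt hpt
        interval_cases t
        simp only [iterFrom, Option.some.injEq] at hpt
        rw [← hpt]
      · show (!w.isEmpty) = true ↔ _
        rw [outBefore_one, outConf_eq h]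
        simp [List.isEmpty_iff]
  | @lft q q2 q3 b3 w r h hτ hc ih =>
      rcases i with _ | j
      · rw [H q2] at hτ; simp at hτ
      · have hτ' : T.crossOpt x j q2 = some (q3, b3) := by rw [← hτ, H q2]
        obtain ⟨m2, hit2, stay2, flag2⟩ := crossOpt_eq_some.mp hτ'
        obtain ⟨m3, hit3, stay3, flag3⟩ := ih
        have hstep0 : T.iterFrom x (q, j + 1) 1 = some (q2, j) := by
          rw [iterFrom_one, stepConf_left h]
        have hshift1 : ∀ t, T.iterFrom x (q, j + 1) (1 + t) = T.iterFrom x (q2, j) t :=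
          iterFrom_shift hstep0
        have hit2' : T.iterFrom x (q, j + 1) (1 + m2) = some (q3, j + 1) := by
          rw [hshift1]; exact hit2
        have hshift2 : ∀ t, T.iterFrom x (q, j + 1) (1 + m2 + t) =
            T.iterFrom x (q3, j + 1) t := iterFrom_shift hit2'
        have hm3 : m3 ≠ 0 := by
          intro h0
          rw [h0] at hit3
          simp only [iterFrom, Option.some.injEq] at hit3
          have := congrArg Prod.snd hit3
          simp at this
        refine ⟨1 + m2 + m3, ?_, ?_, ?_⟩
        · rw [hshift2]; exact hit3
        · intro t ht pt hpt
          rcases Nat.lt_or_ge t 1 with h1 | h1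
          · interval_cases t
            simp only [iterFrom, Option.some.injEq] at hpt
            rw [← hpt]
          · obtain ⟨s, rfl⟩ := Nat.exists_eq_add_of_le h1
            rcases Nat.lt_or_ge s m2 with h2 | h2
            · rw [hshift1] at hpt
              have := stay2 s h2 pt hpt
              simp only at this ⊢
              omega
            · obtain ⟨u, rfl⟩ := Nat.exists_eq_add_of_le h2
              rcases Nat.eq_zero_or_pos u with rfl | hu
              · rw [show 1 + (m2 + 0) = 1 + m2 by ring] at hpt
                rw [hit2'] at hpt
                simp only [Option.some.injEq] at hpt
                rw [← hpt]
              · have hu3 : u < m3 := by omega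
                rw [show 1 + (m2 + u) = 1 + m2 + u by ring, hshift2] at hpt
                exact stay3 u hu3 pt hpt
        · show (!w.isEmpty || b3 || r.2) = true ↔ _
          rw [show 1 + m2 + m3 = (1 + m2) + m3 by ring,
            outBefore_split hit2' m3,
            show 1 + m2 = 1 + m2 by rfl,
            outBefore_split hstep0 m2,
            outBefore_one, outConf_eq h]
          rw [← flag2, ← flag3]
          simp [List.isEmpty_iff, or_assoc]

/-- The syntactic crossing table. -/
def crossFn (T : TDT A B) (τ : T.Q → Option (T.Q × Bool)) (a : Option A) (q : T.Q) :
    Option (T.Q × Bool) :=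
  if h : ∃ r, T.Cross τ a q r then some h.choose else none

lemma crossFn_eq_some {τ : T.Q → Option (T.Q × Bool)} {a : Option A} {q : T.Q}
    {r : T.Q × Bool} : T.crossFn τ a q = some r ↔ T.Cross τ a q r := by
  unfold crossFn
  constructor
  · intro h
    split_ifs at h with hex
    · have hc := hex.choose_spec
      rwa [← Option.some.inj h]
  · intro h
    rw [dif_pos ⟨r, h⟩]
    exact congrArg some (T.cross_unique (Exists.choose_spec ⟨r, h⟩) h)

/-- A semantic crossing yields a `Cross` derivation. -/
lemma crossSem_to_cross {τ : T.Q → Option (T.Q × Bool)} {i : ℕ}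
    (H : ∀ q2, τ q2 = match i with | 0 => none | j + 1 => T.crossOpt x j q2) :
    ∀ m q q' b, T.iterFrom x (q, i) m = some (q', i + 1) →
      (∀ t < m, ∀ pt, T.iterFrom x (q, i) t = some pt → pt.2 ≤ i) →
      (b = true ↔ T.OutBefore x (q, i) m) →
      T.Cross τ (tape x i) q (q', b) := by
  intro m
  induction m using Nat.strong_induction_on with
  | _ m ih =>
  intro q q' b hit stay flag
  have hm1 : 1 ≤ m := by
    rcases Nat.eq_zero_or_pos m with rfl | h
    · simp only [iterFrom, Option.some.injEq] at hit
      have := congrArg Prod.snd hit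
      simp at this
    · exact h
  have hp1 : (T.iterFrom x (q, i) 1).isSome :=
    iterFrom_le_isSome hm1 (by rw [hit]; rfl)
  rcases hs : T.step q (tape x i) with _ | ⟨qn, d, w⟩
  · rw [iterFrom_one, stepConf_none hs] at hp1; simp at hp1
  by_cases hd : d
  all_goals subst_vars
  -- d = true
  case pos =>
    have h1 : T.iterFrom x (q, i) 1 = some (qn, i + 1) := by
      rw [iterFrom_one, stepConf_right hs]
    have hm : m = 1 := by
      by_contra hne
      have hlt : 1 < m := by omega
      have := stay 1 hlt _ h1
      simp at this
    subst hm
    rw [h1] at hit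
    simp only [Option.some.injEq, Prod.mk.injEq] at hit
    obtain ⟨hq, -⟩ := hit
    subst hq
    have h2 : T.OutBefore x (q, i) 1 ↔ w ≠ [] := by rw [outBefore_one, outConf_eq hs]
    have hb : b = !w.isEmpty := by
      rw [h2] at flag
      cases b <;> rcases hw : w.isEmpty <;> simp_all [List.isEmpty_iff]
    rw [hb]
    exact Cross.rgt hs
  -- d = false
  case neg =>
    simp only [Bool.not_eq_true] at hd
    subst hd
    rcases i with _ | j
    · rw [iterFrom_one, stepConf_left0 hs] at hp1; simp at hp1
    · have h1 : T.iterFrom x (q, j + 1) 1 = some (qn, j) := by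
        rw [iterFrom_one, stepConf_left hs]
      have hshift1 := iterFrom_shift h1
      have hPm : ∃ t, t ≤ m - 1 ∧ ∃ pt, T.iterFrom x (qn, j) t = some pt ∧ j + 1 ≤ pt.2 := by
        refine ⟨m - 1, le_refl _, (q', j + 1 + 1), ?_, by omega⟩
        rw [← hshift1, show 1 + (m - 1) = m by omega]
        exact hit
      obtain ⟨ht2le, p2, hp2, hp2pos⟩ := Nat.find_spec hPm
      set t2 := Nat.find hPm with ht2def
      have hmin : ∀ t, t < t2 → t ≤ m - 1 → ∀ pt, T.iterFrom x (qn, j) t = some pt → pt.2 ≤ j := by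
        intro t ht htle pt hpt
        have hnot := Nat.find_min hPm ht
        by_contra hgt
        exact hnot ⟨htle, pt, hpt, by omega⟩
      have ht2pos : 1 ≤ t2 := by
        rcases Nat.eq_zero_or_pos t2 with h0 | h
        · rw [h0] at hp2
          simp only [iterFrom, Option.some.injEq] at hp2
          rw [← hp2] at hp2pos
          simp at hp2pos
        · exact h
      have hp2' : p2.2 = j + 1 := by
        have hprev : (T.iterFrom x (qn, j) (t2 - 1)).isSome :=
          iterFrom_le_isSome (Nat.sub_le t2 1) (by rw [hp2]; rfl)
        obtain ⟨pp, hpp⟩ := Option.isSome_iff_exists.mp hprev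
        have hppj : pp.2 ≤ j := hmin (t2 - 1) (by omega) (by omega) pp hpp
        have hstep : T.stepConf x pp = some p2 := by
          have h5 : T.iterFrom x (qn, j) (t2 - 1 + 1) =
              (T.iterFrom x (qn, j) (t2 - 1)).bind (T.stepConf x) := rfl
          rw [show t2 - 1 + 1 = t2 by omega, hp2, hpp] at h5
          simpa using h5.symm
        have := stepConf_pos hstep
        omega
      have hp2eq : p2 = (p2.1, j + 1) := by rw [← hp2']
      set b3 := if T.OutBefore x (qn, j) t2 then true else false with hb3def
      have hcs2 : T.CrossSem x (qn, j) p2.1 b3 := by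
        refine ⟨t2, ?_, ?_, ?_⟩
        · rw [← hp2eq]; exact hp2
        · intro t ht pt hpt
          exact hmin t ht (by omega) pt hpt
        · by_cases hOB : T.OutBefore x (qn, j) t2 <;> simp [hb3def, hOB]
      have hτ : τ qn = some (p2.1, b3) := by
        rw [H qn]
        exact crossOpt_eq_some.mpr hcs2
      have hit2' : T.iterFrom x (q, j + 1) (1 + t2) = some (p2.1, j + 1) := by
        rw [hshift1, ← hp2eq]
        exact hp2
      have hshift2 := iterFrom_shift hit2'
      have ht2ltm : 1 + t2 < m := by
        by_contra hge
        have heq : t2 = m - 1 := by omega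
        rw [heq] at hp2
        rw [← hshift1, show 1 + (m - 1) = m by omega, hit] at hp2
        have := congrArg Prod.snd (Option.some.inj hp2)
        simp only at this
        omega
      set m3 := m - (1 + t2) with hm3def
      have hit3 : T.iterFrom x (p2.1, j + 1) m3 = some (q', j + 1 + 1) := by
        rw [← hshift2, show 1 + t2 + m3 = m by omega]
        exact hit
      have stay3 : ∀ t, t < m3 → ∀ pt, T.iterFrom x (p2.1, j + 1) t = some pt → pt.2 ≤ j + 1 := by
        intro t ht pt hpt
        apply stay (1 + t2 + t) (by omega) pt
        rw [hshift2]
        exact hpt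
      set b' := if T.OutBefore x (p2.1, j + 1) m3 then true else false with hb'def
      have hcr3 : T.Cross τ (tape x (j + 1)) p2.1 (q', b') :=
        ih m3 (by omega) p2.1 q' b' hit3 (fun t ht pt hpt => stay3 t ht pt hpt)
          (by by_cases hOB : T.OutBefore x (p2.1, j + 1) m3 <;> simp [hb'def, hOB])
      have hmain := Cross.lft (T := T) hs hτ hcr3
      have hdecomp : T.OutBefore x (q, j + 1) m ↔
          (w ≠ [] ∨ T.OutBefore x (qn, j) t2 ∨ T.OutBefore x (p2.1, j + 1) m3) := by
        rw [show m = (1 + t2) + m3 by omega, outBefore_split hit2' m3,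
          outBefore_split h1 t2, outBefore_one, outConf_eq hs, or_assoc]
      have hb : b = (!w.isEmpty || b3 || b') := by
        rw [hdecomp] at flag
        have h2 : b3 = true ↔ T.OutBefore x (qn, j) t2 := by
          by_cases hOB : T.OutBefore x (qn, j) t2 <;> simp [hb3def, hOB]
        have h3 : b' = true ↔ T.OutBefore x (p2.1, j + 1) m3 := by
          by_cases hOB : T.OutBefore x (p2.1, j + 1) m3 <;> simp [hb'def, hOB]
        have h1 : (!w.isEmpty) = true ↔ w ≠ [] := by simp [List.isEmpty_iff]
        have hiff : (b = true) ↔ ((!w.isEmpty || b3 || b') = true) := by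
          simp only [Bool.or_eq_true]
          rw [flag, h1, h2, h3, or_assoc]
        exact Bool.coe_iff_coe.mp hiff
      rw [hb]
      exact hmain

/-- Computing the semantic table from the previous one via `crossFn`. -/
lemma crossFn_correct {τ : T.Q → Option (T.Q × Bool)} {i : ℕ}
    (H : ∀ q2, τ q2 = match i with | 0 => none | j + 1 => T.crossOpt x j q2) (q : T.Q) :
    T.crossFn τ (tape x i) q = T.crossOpt x i q := by
  rcases h : T.crossOpt x i q with _ | ⟨q', b⟩
  · rcases hc : T.crossFn τ (tape x i) q with _ | ⟨r⟩
    · rfl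
    · exfalso
      have hcr := crossFn_eq_some.mp hc
      have hcs := cross_to_crossSem H hcr
      have : T.crossOpt x i q = some (r.1, r.2) := crossOpt_eq_some.mpr hcs
      rw [h] at this
      simp at this
  · rw [crossFn_eq_some]
    obtain ⟨m, hit, stay, fl⟩ := crossOpt_eq_some.mp h
    exact crossSem_to_cross H m q q' b hit stay fl

lemma outAt_eq (c : ℕ → T.Q × ℕ) (n : ℕ) : T.outAt x c n = T.outConf x (c n) := by
  unfold outAt outConf
  rcases h : T.step (c n).1 (tape x (c n).2) with _ | ⟨q, d, w⟩ <;> rfl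

lemma outPrefix_succ (c : ℕ → T.Q × ℕ) (n : ℕ) :
    T.outPrefix x c (n + 1) = T.outPrefix x c n ++ T.outAt x c n := by
  simp [outPrefix, List.range_succ]

lemma outPrefix_prefix (c : ℕ → T.Q × ℕ) {n n' : ℕ} (h : n ≤ n') :
    T.outPrefix x c n <+: T.outPrefix x c n' := by
  obtain ⟨d, rfl⟩ := Nat.exists_eq_add_of_le h
  induction d with
  | zero => exact List.prefix_refl _
  | succ d ihd =>
      rw [show n + (d + 1) = (n + d) + 1 by ring, outPrefix_succ]
      exact (ihd (by omega)).trans (List.prefix_append _ _)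

lemma outPrefix_len_mono (c : ℕ → T.Q × ℕ) {n n' : ℕ} (h : n ≤ n') :
    (T.outPrefix x c n).length ≤ (T.outPrefix x c n').length :=
  (outPrefix_prefix c h).length_le

/-- Iterating from a point of a run gives the run. -/
lemma iterFrom_run {c : ℕ → T.Q × ℕ} (hrun : ∀ n, T.stepConf x (c n) = some (c (n + 1)))
    (k : ℕ) : ∀ t, T.iterFrom x (c k) t = some (c (k + t)) := by
  intro t
  induction t with
  | zero => rfl
  | succ t iht =>
      show (T.iterFrom x (c k) t).bind (T.stepConf x) = _
      rw [iht, ← Nat.add_assoc]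
      simpa using hrun (k + t)

/-- Discrete intermediate value theorem for run positions. -/
lemma pos_ivt {c : ℕ → T.Q × ℕ} (hrun : ∀ n, T.stepConf x (c n) = some (c (n + 1)))
    {a b v : ℕ} (hab : a ≤ b) (ha : (c a).2 < v) (hb : v ≤ (c b).2) :
    ∃ s, a < s ∧ s ≤ b ∧ (c s).2 = v := by
  have hstep : ∀ k, (c (k + 1)).2 ≤ (c k).2 + 1 := by
    intro k
    rcases stepConf_pos (hrun k) with h | h <;> omega
  have hPb : ∃ s, a ≤ s ∧ s ≤ b ∧ v ≤ (c s).2 := ⟨b, hab, le_refl _, hb⟩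
  classical
  obtain ⟨has, hsb, hvs⟩ := Nat.find_spec hPb
  set s := Nat.find hPb with hsdef
  have hsa : a < s := by
    by_contra hle
    have hseq : s = a := by omega
    rw [hseq] at hvs
    omega
  have hprev : (c (s - 1)).2 < v := by
    by_contra hge
    exact Nat.find_min hPb (show s - 1 < s by omega) ⟨by omega, by omega, by omega⟩
  have hs2 := hstep (s - 1)
  rw [show s - 1 + 1 = s by omega] at hs2
  exact ⟨s, hsa, hsb, by omega⟩

/-- If the run is total and its positions are unbounded, the positions tend to infinity. -/
lemma tendsto_of_unbounded {c : ℕ → T.Q × ℕ}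
    (hrun : ∀ n, T.stepConf x (c n) = some (c (n + 1)))
    (hub : ∀ m, ∃ k, m ≤ (c k).2) :
    ∀ m, ∃ N, ∀ k, N ≤ k → m ≤ (c k).2 := by
  by_contra hcon
  push_neg at hcon
  obtain ⟨m, hm⟩ := hcon
  have hS : {k | (c k).2 < m}.Infinite := by
    apply Set.infinite_of_not_bddAbove
    rintro ⟨N, hN⟩
    obtain ⟨k, hkN, hk⟩ := hm (N + 1)
    exact absurd (hN (show k ∈ {k | (c k).2 < m} from hk)) (by omega)
  obtain ⟨k, -, k', -, hne, heq⟩ :=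
    hS.exists_ne_map_eq_of_mapsTo
      (f := c) (t := (Set.univ : Set T.Q) ×ˢ Set.Iio m)
      (fun k hk => ⟨Set.mem_univ _, hk⟩)
      ((Set.finite_univ).prod (Set.finite_Iio m))
  wlog hkk : k < k' generalizing k k'
  · exact this k' k hne.symm heq.symm (by omega)
  have hper : ∀ j, c (k + j) = c (k' + j) := by
    intro j
    induction j with
    | zero => simpa using heq
    | succ j ihj =>
        have h1 := hrun (k + j)
        have h2 := hrun (k' + j)
        rw [ihj] at h1
        rw [h1] at h2
        have := Option.some.inj h2
        rw [show k + (j + 1) = k + j + 1 by ring, show k' + (j + 1) = k' + j + 1 by ring, this]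
  have hred : ∀ u, ∃ u', u' ≤ k' ∧ c u = c u' := by
    intro u
    induction u using Nat.strong_induction_on with
    | _ u ihu =>
    rcases Nat.lt_or_ge u (k' + 1) with h | h
    · exact ⟨u, by omega, rfl⟩
    · have hu : u = k' + (u - k') := by omega
      have h3 : c u = c (k + (u - k')) := by
        conv_lhs => rw [hu]
        rw [← hper]
      obtain ⟨u', hu', hcu⟩ := ihu (k + (u - k')) (by omega)
      exact ⟨u', hu', h3.trans hcu⟩
  set M := (Finset.range (k' + 1)).sup (fun u => (c u).2) with hM
  obtain ⟨kk, hkk2⟩ := hub (M + 1)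
  obtain ⟨u', hu', hcu⟩ := hred kk
  have : (c u').2 ≤ M :=
    Finset.le_sup (f := fun u => (c u).2) (Finset.mem_range.mpr (by omega))
  rw [hcu] at hkk2
  omega

/-- The deterministic Büchi automaton simulating the 2-dT. -/
def toDBA (T : TDT A B) : DBA A :=
  letI : DecidableEq T.Q := Classical.decEq T.Q
  { Q := (T.Q → Option (T.Q × Bool)) × T.Q × Bool
    fin := inferInstance
    q0 := (T.crossFn (fun _ => none) none, T.q0, false)
    δ := fun st a =>
      match st.1 st.2.1 with
      | none => none
      | some (s', b') => some (T.crossFn st.1 (some a), s', b')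
    F := {st | st.2.2 = true} }

lemma toDBA_δ (st : (T.toDBA).Q) (a : A) :
    (T.toDBA).δ st a = match st.1 st.2.1 with
      | none => none
      | some (s', b') => some (T.crossFn st.1 (some a), s', b') := rfl

lemma toDBA_q0_table (x : ℕ → A) :
    T.crossFn (fun _ => none) none = T.crossOpt x 0 := by
  funext q
  exact crossFn_correct (i := 0) (fun _ => rfl) q

lemma toDBA_table {x : ℕ → A} : ∀ n st, (T.toDBA).runAt x n = some st →
    st.1 = T.crossOpt x n := by
  intro n
  induction n with
  | zero =>
      intro st h
      simp only [DBA.runAt, Option.some.injEq] at h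
      rw [← h]
      exact toDBA_q0_table x
  | succ n ihn =>
      intro st h
      rw [DBA.runAt] at h
      rcases h0 : (T.toDBA).runAt x n with _ | st0 <;> rw [h0] at h
      · simp at h
      · simp only [Option.bind_some] at h
        rw [toDBA_δ] at h
        rcases hd : st0.1 st0.2.1 with _ | ⟨s', b'⟩ <;> rw [hd] at h
        · simp at h
        · simp only [Option.some.injEq] at h
          rw [← Option.some.inj h]
          show T.crossFn st0.1 (some (x n)) = _
          rw [← tape_succ x n]
          funext q
          refine crossFn_correct (fun q2 => ?_) q
          rw [ihn st0 h0]

lemma runAt_isSome_mono {D : DBA A} {x : ℕ → A} {n n' : ℕ} (h : n ≤ n')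
    (hs : (D.runAt x n').isSome) : (D.runAt x n).isSome := by
  obtain ⟨d, rfl⟩ := Nat.exists_eq_add_of_le h
  induction d with
  | zero => exact hs
  | succ d ihd =>
      apply ihd (by omega)
      rw [show n + (d + 1) = (n + d) + 1 by ring, DBA.runAt] at hs
      rcases h0 : D.runAt x (n + d) with _ | st0 <;> rw [h0] at hs
      · simp at hs
      · rfl

/-- Direction 1: an accepting run with infinite output makes the DBA accept. -/
lemma accepts_of_run {x : ℕ → A} {c : ℕ → T.Q × ℕ}
    (hacc : T.AcceptingRun x c)
    (hout : ∀ m, ∃ n, m ≤ (T.outPrefix x c n).length) :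
    (T.toDBA).Accepts x := by
  obtain ⟨hisrun, htend⟩ := hacc
  obtain ⟨h0, hrun⟩ := isRun_iff.mp hisrun
  have hex : ∀ n, ∃ k, (c k).2 = n := by
    intro n
    rcases Nat.eq_zero_or_pos n with rfl | hn
    · exact ⟨0, by rw [h0]⟩
    · obtain ⟨N, hN⟩ := htend n
      have hcN : n ≤ (c N).2 := hN N (le_refl _)
      have h00 : (c 0).2 < n := by rw [h0]; simpa using hn
      obtain ⟨s, -, -, hs⟩ := pos_ivt hrun (Nat.zero_le N) h00 hcN
      exact ⟨s, hs⟩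
  classical
  set t : ℕ → ℕ := fun n => Nat.find (hex n) with htdef
  have hts : ∀ n, (c (t n)).2 = n := fun n => Nat.find_spec (hex n)
  have htmin : ∀ n k, k < t n → (c k).2 ≠ n := fun n k hk => Nat.find_min (hex n) hk
  have ht0 : t 0 = 0 := by
    have h00 : (c 0).2 = 0 := by rw [h0]
    have h1 : t 0 ≤ 0 := Nat.find_min' (hex 0) h00
    omega
  have htlt : ∀ n, t n < t (n + 1) := by
    intro n
    have hle : t n ≤ t (n + 1) := by
      rcases Nat.eq_zero_or_pos n with rfl | hn
      · rw [ht0]; omega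
      · have h00 : (c 0).2 < n := by rw [h0]; simpa using hn
        have hup : n ≤ (c (t (n + 1))).2 := by rw [hts]; omega
        obtain ⟨s, -, hs2, hs3⟩ := pos_ivt hrun (Nat.zero_le _) h00 hup
        exact le_trans (Nat.find_min' (hex n) hs3) hs2
    have hne : t n ≠ t (n + 1) := by
      intro heq
      have h1 := hts n
      rw [heq, hts (n + 1)] at h1
      omega
    omega
  have hcross : ∀ n, T.CrossSem x (c (t n)) ((c (t (n + 1))).1)
      (if T.OutBefore x (c (t n)) (t (n + 1) - t n) then true else false) := by
    intro n
    refine ⟨t (n + 1) - t n, ?_, ?_, ?_⟩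
    · rw [iterFrom_run hrun (t n) (t (n + 1) - t n),
        show t n + (t (n + 1) - t n) = t (n + 1) by (have := htlt n; omega)]
      congr 1
      exact Prod.ext rfl (by rw [hts, hts])
    · intro u hu pt hpt
      rw [iterFrom_run hrun] at hpt
      replace hpt := Option.some.inj hpt
      rw [← hpt, hts]
      by_contra hgt
      push_neg at hgt
      have hlow : (c (t n)).2 < n + 1 := by rw [hts]; omega
      obtain ⟨s, hs1, hs2, hs3⟩ := pos_ivt hrun (show t n ≤ t n + u by omega) hlow hgt
      exact htmin (n + 1) s (by omega) hs3
    · by_cases hOB : T.OutBefore x (c (t n)) (t (n + 1) - t n) <;> simp [hOB]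
  have hDBA : ∀ n, (T.toDBA).runAt x n = some (T.crossOpt x n, (c (t n)).1,
      if h : n = 0 then false else
        if T.OutBefore x (c (t (n - 1))) (t n - t (n - 1)) then true else false) := by
    intro n
    induction n with
    | zero =>
        show some (T.toDBA).q0 = _
        rw [show (T.toDBA).q0 = (T.crossFn (fun _ => none) none, T.q0, false) from rfl,
          toDBA_q0_table x, ht0, h0]
        simp
        rfl
    | succ n ihn =>
        rw [DBA.runAt, ihn]
        erw [Option.bind_some]
        erw [toDBA_δ]
        have hcn : c (t n) = ((c (t n)).1, n) := Prod.ext rfl (hts n)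
        have hc' : T.CrossSem x ((c (t n)).1, n) ((c (t (n + 1))).1)
            (if T.OutBefore x (c (t n)) (t (n + 1) - t n) then true else false) := by
          rw [← hcn]
          exact hcross n
        have hsome := crossOpt_eq_some.mpr hc'
        simp only []
        rw [hsome]
        refine congrArg some ?_
        refine Prod.ext ?_ (Prod.ext rfl ?_)
        · show T.crossFn (T.crossOpt x n) (some (x n)) = T.crossOpt x (n + 1)
          rw [← tape_succ x n]
          funext q
          exact crossFn_correct (i := n + 1) (τ := T.crossOpt x n) (fun q2 => rfl) q
        · show (if T.OutBefore x (c (t n)) (t (n + 1) - t n) then true else false) =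
            (if h : n + 1 = 0 then false
             else if T.OutBefore x (c (t (n + 1 - 1))) (t (n + 1) - t (n + 1 - 1)) then true
                  else false)
          rw [dif_neg (Nat.succ_ne_zero n)]
  -- unboundedness of output steps
  have houtstep : ∀ k0, ∃ u, k0 ≤ u ∧ T.outConf x (c u) ≠ [] := by
    intro k0
    by_contra hnone
    push_neg at hnone
    have hconst : ∀ d, (T.outPrefix x c (k0 + d)).length ≤ (T.outPrefix x c k0).length := by
      intro d
      induction d with
      | zero => exact le_refl _
      | succ d ihd =>
          rw [show k0 + (d + 1) = (k0 + d) + 1 by ring, outPrefix_succ, List.length_append]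
          have hempty : T.outAt x c (k0 + d) = [] := by
            rw [outAt_eq]
            exact hnone _ (by omega)
          rw [hempty]
          simpa using ihd
    obtain ⟨nn, hnn⟩ := hout ((T.outPrefix x c k0).length + 1)
    rcases le_or_gt nn k0 with h | h
    · have := outPrefix_len_mono (T := T) (x := x) c h
      omega
    · have := hconst (nn - k0)
      rw [show k0 + (nn - k0) = nn by omega] at this
      omega
  have hmono : Monotone t := monotone_nat_of_le_succ (fun n => (htlt n).le)
  have hint : ∀ u, ∃ n, t n ≤ u ∧ u < t (n + 1) := by
    intro u
    induction u with
    | zero => exact ⟨0, by rw [ht0], by have := htlt 0; omega⟩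
    | succ u ihu =>
        obtain ⟨n, h1, h2⟩ := ihu
        rcases Nat.lt_or_ge (u + 1) (t (n + 1)) with h | h
        · exact ⟨n, by omega, h⟩
        · exact ⟨n + 1, by omega, by have := htlt (n + 1); omega⟩
  intro i
  obtain ⟨u, hu1, hu2⟩ := houtstep (t i)
  obtain ⟨n, hn1, hn2⟩ := hint u
  have hin : i ≤ n + 1 := by
    by_contra hgt
    have := hmono (show n + 1 ≤ i by omega)
    omega
  refine ⟨n + 1, hin, _, hDBA (n + 1), ?_⟩
  show (if h : n + 1 = 0 then false else
    if T.OutBefore x (c (t (n + 1 - 1))) (t (n + 1) - t (n + 1 - 1)) then true else false) = true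
  rw [dif_neg (Nat.succ_ne_zero n)]
  simp only [Nat.add_sub_cancel]
  rw [if_pos]
  exact ⟨u - t n, c u, by omega,
    by rw [iterFrom_run hrun, show t n + (u - t n) = u by omega], hu2⟩

/-- Direction 2: if the DBA accepts, there is an accepting run with infinite output. -/
lemma run_of_accepts {x : ℕ → A} (hacc : (T.toDBA).Accepts x) :
    ∃ c, T.AcceptingRun x c ∧ (∀ m, ∃ n, m ≤ (T.outPrefix x c n).length) := by
  classical
  have hdef : ∀ n, ∃ s, (T.toDBA).runAt x n = some s := by
    intro n
    obtain ⟨j, hj, s, hsj, -⟩ := hacc n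
    have := runAt_isSome_mono hj (by rw [hsj]; rfl)
    exact Option.isSome_iff_exists.mp this
  set st : ℕ → (T.toDBA).Q := fun n => (hdef n).choose with hstdef
  have hst : ∀ n, (T.toDBA).runAt x n = some (st n) := fun n => (hdef n).choose_spec
  have htab : ∀ n, (st n).1 = T.crossOpt x n := fun n => toDBA_table n (st n) (hst n)
  have hs0 : st 0 = (T.toDBA).q0 := by
    have h1 := hst 0
    simp only [DBA.runAt, Option.some.injEq] at h1
    exact h1.symm
  have hstep : ∀ n, T.crossOpt x n ((st n).2.1) =
      some ((st (n + 1)).2.1, (st (n + 1)).2.2) := by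
    intro n
    have h1 := hst (n + 1)
    rw [DBA.runAt, hst n] at h1
    simp only [Option.bind_some] at h1
    rw [toDBA_δ] at h1
    rcases hd : (st n).1 (st n).2.1 with _ | ⟨s', b'⟩ <;> rw [hd] at h1
    · simp at h1
    · simp only [Option.some.injEq] at h1
      rw [← htab n, hd, ← Option.some.inj h1]
  have hCS : ∀ n, T.CrossSem x ((st n).2.1, n) ((st (n + 1)).2.1) ((st (n + 1)).2.2) :=
    fun n => crossOpt_eq_some.mp (hstep n)
  have hmm : ∀ n, ∃ m, T.iterFrom x ((st n).2.1, n) m = some ((st (n + 1)).2.1, n + 1) ∧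
      1 ≤ m ∧ ((st (n + 1)).2.2 = true ↔ T.OutBefore x ((st n).2.1, n) m) := by
    intro n
    obtain ⟨m, hit, stay, flag⟩ := hCS n
    refine ⟨m, hit, ?_, flag⟩
    rcases Nat.eq_zero_or_pos m with rfl | h
    · simp only [iterFrom, Option.some.injEq] at hit
      have := congrArg Prod.snd hit
      simp at this
    · exact h
  set mm : ℕ → ℕ := fun n => (hmm n).choose with hmmdef
  set TT : ℕ → ℕ := fun n => Nat.rec (motive := fun _ => ℕ) 0 (fun k acc => acc + mm k) n
    with hTTdef
  have hTT0 : TT 0 = 0 := rfl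
  have hTTs : ∀ n, TT (n + 1) = TT n + mm n := fun n => rfl
  have horb : ∀ n, T.iterFrom x (T.q0, 0) (TT n) = some ((st n).2.1, n) := by
    intro n
    induction n with
    | zero =>
        rw [hTT0]
        show some (T.q0, 0) = _
        rw [hs0]
        rfl
    | succ n ihn =>
        rw [hTTs, iterFrom_shift ihn]
        exact ((hmm n).choose_spec).1
  have hTTmono : ∀ n, TT n < TT (n + 1) := by
    intro n
    have h1 : 1 ≤ mm n := ((hmm n).choose_spec).2.1
    rw [hTTs]
    omega
  have hTTge : ∀ n, n ≤ TT n := by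
    intro n
    induction n with
    | zero => omega
    | succ n ihn => have := hTTmono n; omega
  have htotal : ∀ k, ∃ p, T.iterFrom x (T.q0, 0) k = some p := by
    intro k
    have h1 : (T.iterFrom x (T.q0, 0) (TT k)).isSome = true := by rw [horb k]; rfl
    exact Option.isSome_iff_exists.mp (iterFrom_le_isSome (hTTge k) h1)
  set c : ℕ → T.Q × ℕ := fun k => (htotal k).choose with hcdef
  have hc : ∀ k, T.iterFrom x (T.q0, 0) k = some (c k) := fun k => (htotal k).choose_spec
  have hc0 : c 0 = (T.q0, 0) := by
    have h1 := hc 0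
    simp only [iterFrom, Option.some.injEq] at h1
    exact h1.symm
  have hrun : ∀ k, T.stepConf x (c k) = some (c (k + 1)) := by
    intro k
    have h1 := hc (k + 1)
    rw [iterFrom, hc k] at h1
    simpa using h1
  have hcTT : ∀ n, c (TT n) = ((st n).2.1, n) := by
    intro n
    have h1 := hc (TT n)
    rw [horb n] at h1
    exact (Option.some.inj h1).symm
  have hub : ∀ m, ∃ k, m ≤ (c k).2 := by
    intro m
    refine ⟨TT m, ?_⟩
    rw [hcTT]
  have htend := tendsto_of_unbounded hrun hub
  have houtsteps : ∀ k0, ∃ u, k0 ≤ u ∧ T.outAt x c u ≠ [] := by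
    intro k0
    obtain ⟨j, hj, q, hq, hqF⟩ := hacc (k0 + 1)
    have hqst : q = st j := by
      rw [hst j] at hq
      exact (Option.some.inj hq).symm
    have hflag : (st j).2.2 = true := by rw [← hqst]; exact hqF
    obtain ⟨n, rfl⟩ : ∃ n, j = n + 1 := by
      rcases Nat.eq_zero_or_pos j with rfl | h
      · rw [hs0] at hflag
        simp [toDBA] at hflag
      · exact ⟨j - 1, by omega⟩
    have hOB := (((hmm n).choose_spec).2.2).mp hflag
    obtain ⟨u0, pt, hu0, hiter, hne⟩ := hOB
    have h2 : T.iterFrom x (c (TT n)) u0 = some pt := by rw [hcTT]; exact hiter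
    rw [iterFrom_run hrun] at h2
    have hpt : pt = c (TT n + u0) := (Option.some.inj h2).symm
    refine ⟨TT n + u0, ?_, ?_⟩
    · have := hTTge n
      omega
    · rw [outAt_eq, ← hpt]
      exact hne
  have hlen : ∀ m, ∃ nn, m ≤ (T.outPrefix x c nn).length := by
    intro m
    induction m with
    | zero => exact ⟨0, Nat.zero_le _⟩
    | succ m ihm =>
        obtain ⟨nn, hnn⟩ := ihm
        obtain ⟨u, hu1, hu2⟩ := houtsteps nn
        refine ⟨u + 1, ?_⟩
        rw [outPrefix_succ, List.length_append]
        have h1 := outPrefix_len_mono (T := T) (x := x) c hu1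
        have h2 : 1 ≤ (T.outAt x c u).length := by
          rcases hw : T.outAt x c u with _ | ⟨bb, w⟩
          · exact absurd hw hu2
          · simp
        omega
  exact ⟨c, ⟨isRun_iff.mpr ⟨hc0, hrun⟩, htend⟩, hlen⟩

/-- Build the infinite output word from the unbounded chain of output prefixes. -/
lemma exists_y {x : ℕ → A} {c : ℕ → T.Q × ℕ}
    (hlen : ∀ m, ∃ n, m ≤ (T.outPrefix x c n).length) :
    ∃ y : ℕ → B, ∀ n, PrefixOf (T.outPrefix x c n) y := by
  classical
  have hj : ∀ j : ℕ, ∃ n, j + 1 ≤ (T.outPrefix x c n).length := fun j => hlen (j + 1)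
  have hjlt : ∀ j, j < (T.outPrefix x c (hj j).choose).length := fun j => (hj j).choose_spec
  refine ⟨fun j => (T.outPrefix x c (hj j).choose).get ⟨j, hjlt j⟩, ?_⟩
  intro n i hi
  show (T.outPrefix x c n).get ⟨i, hi⟩ = (T.outPrefix x c (hj i).choose).get ⟨i, hjlt i⟩
  have h1 : T.outPrefix x c n <+: T.outPrefix x c (max n (hj i).choose) :=
    outPrefix_prefix c (le_max_left _ _)
  have h2 : T.outPrefix x c (hj i).choose <+: T.outPrefix x c (max n (hj i).choose) :=
    outPrefix_prefix c (le_max_right _ _)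
  simp only [List.get_eq_getElem]
  exact (h1.getElem hi).trans (h2.getElem (hjlt i)).symm

end TDT


end Dev
/-- The domain of a deterministic regular function is Büchi deterministic. -/
theorem detRegular_domain_buchiDet
    {A B : Type} [Fintype A] [Fintype B]
    (f : (ℕ → A) → Option (ℕ → B)) (hf : DetRegular f) :
    BuchiDet {x : ℕ → A | ∃ y, f x = some y} := by
  obtain ⟨T, hT⟩ := hf
  refine ⟨T.toDBA, fun x => ?_⟩
  constructor
  · rintro ⟨y, hy⟩
    obtain ⟨c, hacc, hlen, -⟩ := (hT x y).mp hy
    exact TDT.accepts_of_run hacc hlen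
  · intro hacc
    obtain ⟨c, haccrun, hlen⟩ := TDT.run_of_accepts hacc
    obtain ⟨y, hy⟩ := TDT.exists_y hlen
    exact ⟨y, (hT x y).mpr ⟨c, haccrun, hlen, hy⟩⟩
end

section
/- Let T be an unambiguous, clean and trim 1-nT computing a continuous partial function f : A^ω ⇀ B^ω. Let q₁,q₂ ∈ I, q₁' ∈ F, q₂' ∈ Q, u ∈ A*, u' ∈ A⁺ and α₁,α₁',α₂,α₂' ∈ B* be such that q_i →^{u|α_i} q_i' →^{u'|α_i'} q_i' for i ∈ {1,2}. Then α₁' ≠ ε, and moreover: (i) if α₂' ≠ ε then α₁(α₁')^ω = α₂(α₂')^ω; (ii) if α₂' = ε and there is a final run on some x ∈ A^ω starting in q₂' with infinite output β ∈ B^ω, then α₁(α₁')^ω = α₂β. -/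
/-- A one-way nondeterministic transducer (1-nT). The output function is given on
all triples; it is only relevant on the transition relation. -/
structure NT (A B : Type) where
  Q : Type
  fin : Fintype Q
  I : Set Q
  F : Set Q
  trans : Q → A → Q → Prop
  out : Q → A → Q → List B

attribute [instance] NT.fin

namespace NT

variable {A B : Type}

/-- `FinRun T q u α q'` means `q →^{u|α} q'`. -/
inductive FinRun (T : NT A B) : T.Q → List A → List B → T.Q → Prop
  | nil (q : T.Q) : FinRun T q [] [] q
  | cons {q q' q'' : T.Q} {a : A} {u : List A} {α : List B} :
      T.trans q a q' → FinRun T q' u α q'' →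
      FinRun T q (a :: u) (T.out q a q' ++ α) q''

/-- Infinite run on `x` (the `i`-th transition reads `x i`). -/
def IsRun (T : NT A B) (x : ℕ → A) (ρ : ℕ → T.Q) : Prop :=
  ∀ i : ℕ, T.trans (ρ i) (x i) (ρ (i + 1))

/-- Büchi condition: final states are visited infinitely often. -/
def Final (T : NT A B) (ρ : ℕ → T.Q) : Prop :=
  ∀ i : ℕ, ∃ j : ℕ, i ≤ j ∧ ρ j ∈ T.F

/-- Accepting run: an initial and final run. -/
def Accepting (T : NT A B) (x : ℕ → A) (ρ : ℕ → T.Q) : Prop :=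
  T.IsRun x ρ ∧ ρ 0 ∈ T.I ∧ T.Final ρ

/-- Output along the first `n` transitions of a run. -/
def outPrefix (T : NT A B) (x : ℕ → A) (ρ : ℕ → T.Q) (n : ℕ) : List B :=
  ((List.range n).map (fun i => T.out (ρ i) (x i) (ρ (i + 1)))).flatten

/-- The output along the run is infinite. -/
def InfiniteOutput (T : NT A B) (x : ℕ → A) (ρ : ℕ → T.Q) : Prop :=
  ∀ m : ℕ, ∃ n : ℕ, m ≤ (T.outPrefix x ρ n).length

/-- The (infinite) output along the run equals `y`. -/
def OutEq (T : NT A B) (x : ℕ → A) (ρ : ℕ → T.Q) (y : ℕ → B) : Prop :=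
  ∀ n : ℕ, PrefixOf (T.outPrefix x ρ n) y

/-- Every input labels at most one accepting run. -/
def Unambiguous (T : NT A B) : Prop :=
  ∀ x ρ₁ ρ₂, T.Accepting x ρ₁ → T.Accepting x ρ₂ → ρ₁ = ρ₂

/-- The partial function computed by an unambiguous 1-nT. -/
def Computes (T : NT A B) (f : (ℕ → A) → Option (ℕ → B)) : Prop :=
  ∀ x y, f x = some y ↔
    ∃ ρ, T.Accepting x ρ ∧ T.InfiniteOutput x ρ ∧ T.OutEq x ρ y

/-- Every state occurs in some accepting run. -/
def Trim (T : NT A B) : Prop :=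
  ∀ q : T.Q, ∃ x ρ, T.Accepting x ρ ∧ ∃ i, ρ i = q

/-- The output along every accepting run is infinite. -/
def Clean (T : NT A B) : Prop :=
  ∀ x ρ, T.Accepting x ρ → T.InfiniteOutput x ρ

end NT

/-- Continuity (for the Cantor topology) of a partial function on infinite words. -/
def ContinuousPartial {A B : Type} (f : (ℕ → A) → Option (ℕ → B)) : Prop :=
  ∀ x fx, f x = some fx → ∀ n : ℕ, ∃ p : ℕ, ∀ y fy, f y = some fy →
    (∀ i < p, x i = y i) → ∀ i < n, fx i = fy i


section AuxContinuityLoops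

variable {B : Type}

lemma listPrepend_lt {u : List B} {y : ℕ → B} {i : ℕ} (h : i < u.length) :
    listPrepend u y i = u.get ⟨i, h⟩ := dif_pos h

lemma listPrepend_ge {u : List B} {y : ℕ → B} {i : ℕ} (h : u.length ≤ i) :
    listPrepend u y i = y (i - u.length) := dif_neg (by omega)

@[simp] lemma powList_zero (v : List B) : powList v 0 = [] := rfl

lemma powList_succ (v : List B) (k : ℕ) : powList v (k+1) = v ++ powList v k := by
  simp [powList, List.replicate_succ]

lemma powList_succ' (v : List B) (k : ℕ) : powList v (k+1) = powList v k ++ v := by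
  simp [powList, List.replicate_succ']

@[simp] lemma powList_length (v : List B) (k : ℕ) : (powList v k).length = k * v.length := by
  induction k with
  | zero => simp
  | succ k ih => rw [powList_succ]; simp [ih]; ring

lemma powList_prefix (v : List B) {n k : ℕ} (h : n ≤ k) : powList v n <+: powList v k := by
  induction k with
  | zero => simp_all
  | succ k ih =>
    rcases Nat.lt_or_ge n (k+1) with h' | h'
    · exact (ih (by omega)).trans ⟨v, (powList_succ' v k).symm⟩
    · have : n = k + 1 := by omega
      subst this; exact List.prefix_rfl

lemma powList_pos {v : List B} {k i : ℕ} (h : i < (powList v k).length) : 0 < v.length := by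
  rcases Nat.eq_zero_or_pos v.length with h0|h0
  · rw [powList_length, h0, Nat.mul_zero] at h; omega
  · exact h0

lemma powList_get (v : List B) (k i : ℕ) (h : i < (powList v k).length) :
    (powList v k).get ⟨i, h⟩ = v.get ⟨i % v.length, Nat.mod_lt _ (powList_pos h)⟩ := by
  induction k generalizing i with
  | zero => simp at h
  | succ k ih =>
    have hv : 0 < v.length := powList_pos h
    have hlen : (powList v (k+1)) = v ++ powList v k := powList_succ v k
    simp only [List.get_eq_getElem] at *
    rw [List.getElem_of_eq hlen h]
    rcases Nat.lt_or_ge i v.length with hi | hi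
    · rw [List.getElem_append_left hi]; congr 1; exact (Nat.mod_eq_of_lt hi).symm
    · have h2 : i - v.length < (powList v k).length := by
        rw [powList_length] at h ⊢; rw [Nat.succ_mul] at h; omega
      rw [List.getElem_append_right hi, ih _ h2]; congr 1
      conv_rhs => rw [show i = v.length + (i - v.length) by omega]
      rw [Nat.add_mod_left]

lemma prefixOf_of_isPrefix {l₁ l₂ : List B} {y : ℕ → B} (h : l₁ <+: l₂)
    (h2 : PrefixOf l₂ y) : PrefixOf l₁ y := by
  intro i hi
  have h3 := h2 i (lt_of_lt_of_le hi h.length_le)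
  simp only [List.get_eq_getElem] at *
  rw [← h3]; exact h.getElem hi

lemma prefixOf_of_agree {l : List B} {y z : ℕ → B} (h : PrefixOf l y)
    (hag : ∀ i < l.length, y i = z i) : PrefixOf l z := by
  intro i hi; rw [h i hi]; exact hag i hi

lemma prefixOf_append_prepend {l : List B} {w : List B} {y : ℕ → B} (h : PrefixOf l y) :
    PrefixOf (w ++ l) (listPrepend w y) := by
  intro i hi
  simp only [List.get_eq_getElem]
  rcases Nat.lt_or_ge i w.length with h' | h'
  · rw [List.getElem_append_left h', listPrepend_lt h']; rfl
  · rw [List.getElem_append_right h', listPrepend_ge h']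
    have hi2 : i - w.length < l.length := by simp at hi; omega
    have := h _ hi2; simp only [List.get_eq_getElem] at this; exact this



namespace NT
variable {A B : Type} (T : NT A B)

lemma outPrefix_zero (x : ℕ → A) (ρ : ℕ → T.Q) : T.outPrefix x ρ 0 = [] := by
  simp [outPrefix]

lemma outPrefix_succ (x : ℕ → A) (ρ : ℕ → T.Q) (n : ℕ) :
    T.outPrefix x ρ (n+1) = T.outPrefix x ρ n ++ T.out (ρ n) (x n) (ρ (n+1)) := by
  simp [outPrefix, List.range_succ]

lemma outPrefix_add (x : ℕ → A) (ρ : ℕ → T.Q) (n j : ℕ) :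
    T.outPrefix x ρ (n + j) = T.outPrefix x ρ n ++
      ((List.range j).map (fun i => T.out (ρ (n+i)) (x (n+i)) (ρ (n+i+1)))).flatten := by
  induction j with
  | zero => simp
  | succ j ih =>
    rw [show n + (j+1) = (n+j)+1 by omega, outPrefix_succ, ih, List.range_succ]
    simp

lemma outPrefix_prefix (x : ℕ → A) (ρ : ℕ → T.Q) {n n' : ℕ} (h : n ≤ n') :
    T.outPrefix x ρ n <+: T.outPrefix x ρ n' := by
  obtain ⟨j, rfl⟩ := Nat.le.dest h
  rw [outPrefix_add]; exact List.prefix_append _ _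

lemma outPrefix_length_le (x : ℕ → A) (ρ : ℕ → T.Q) {n n' : ℕ} (h : n ≤ n') :
    (T.outPrefix x ρ n).length ≤ (T.outPrefix x ρ n').length :=
  (T.outPrefix_prefix x ρ h).length_le

lemma finRun_append {q q' q'' : T.Q} {u v : List A} {α β : List B}
    (h1 : T.FinRun q u α q') (h2 : T.FinRun q' v β q'') :
    T.FinRun q (u ++ v) (α ++ β) q'' := by
  induction h1 with
  | nil => simpa using h2
  | cons htr hrun ih =>
    rw [List.cons_append, List.append_assoc]
    exact FinRun.cons htr (ih h2)

lemma finRun_pow {p : T.Q} {v : List A} {β : List B} (h : T.FinRun p v β p) (k : ℕ) :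
    T.FinRun p (powList v k) (powList β k) p := by
  induction k with
  | zero => exact FinRun.nil p
  | succ k ih => rw [powList_succ, powList_succ]; exact T.finRun_append h ih

/-- outPrefix for a "shift by one" pair of runs. -/
lemma outPrefix_shift_one {x' : ℕ → A} {σ : ℕ → T.Q} {x'' : ℕ → A} {σ' : ℕ → T.Q}
    (hσ : ∀ i, σ (i+1) = σ' i) (hx : ∀ i, x' (i+1) = x'' i) (n : ℕ) :
    T.outPrefix x' σ (n+1) = T.out (σ 0) (x' 0) (σ 1) ++ T.outPrefix x'' σ' n := by
  induction n with
  | zero => rw [outPrefix_succ, outPrefix_zero, outPrefix_zero]; simp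
  | succ n ih =>
    rw [outPrefix_succ, ih, outPrefix_succ, hσ n, hσ (n+1), hx n, List.append_assoc]


lemma listPrepend_cons_zero {C : Type} (a : C) (u : List C) (x : ℕ → C) :
    listPrepend (a :: u) x 0 = a := by
  rw [listPrepend_lt (show 0 < (a::u).length by simp)]; rfl

lemma listPrepend_cons_succ {C : Type} (a : C) (u : List C) (x : ℕ → C) (j : ℕ) :
    listPrepend (a :: u) x (j+1) = listPrepend u x j := by
  by_cases h : j < u.length
  · rw [listPrepend_lt (show j+1 < (a::u).length by simp; omega), listPrepend_lt h]
    simp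
  · rw [listPrepend_ge (show (a::u).length ≤ j+1 by simp; omega),
        listPrepend_ge (show u.length ≤ j by omega)]
    congr 1; simp only [List.length_cons]; omega

lemma prepend_run {q q' : T.Q} {u : List A} {α : List B} (h : T.FinRun q u α q') :
    ∀ (x : ℕ → A) (ρ : ℕ → T.Q), T.IsRun x ρ → ρ 0 = q' →
    ∃ σ : ℕ → T.Q, T.IsRun (listPrepend u x) σ ∧ σ 0 = q ∧
      (∀ i, σ (u.length + i) = ρ i) ∧
      (∀ n, T.outPrefix (listPrepend u x) σ (u.length + n) = α ++ T.outPrefix x ρ n) := by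
  induction h with
  | nil q =>
    intro x ρ hρ h0
    have hx : listPrepend ([] : List A) x = x := by
      funext i; exact listPrepend_ge (Nat.zero_le i)
    exact ⟨ρ, by rw [hx]; exact hρ, h0, fun i => by simp, fun n => by rw [hx]; simp⟩
  | @cons q qm q'' a u α htr hrun ih =>
    intro x ρ hρ h0
    obtain ⟨σ', hrun', h0', hσρ, hout⟩ := ih x ρ hρ h0
    set σ : ℕ → T.Q := fun i => match i with | 0 => q | (j+1) => σ' j with hσdef
    have hσs : ∀ j, σ (j+1) = σ' j := fun j => rfl
    refine ⟨σ, ?_, rfl, ?_, ?_⟩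
    · intro i
      match i with
      | 0 =>
        show T.trans q (listPrepend (a :: u) x 0) (σ' 0)
        rw [listPrepend_cons_zero, h0']; exact htr
      | (j+1) =>
        show T.trans (σ' j) (listPrepend (a :: u) x (j+1)) (σ' (j+1))
        rw [listPrepend_cons_succ]; exact hrun' j
    · intro i
      have he : (a :: u).length + i = (u.length + i) + 1 := by simp; omega
      rw [he, hσs]; exact hσρ i
    · intro n
      have he : (a :: u).length + n = (u.length + n) + 1 := by simp; omega
      rw [he, T.outPrefix_shift_one hσs (listPrepend_cons_succ a u x) (u.length + n),
          hout n]
      have h1 : σ 1 = qm := by rw [hσs 0, h0']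
      rw [show σ 0 = q from rfl, h1, listPrepend_cons_zero, List.append_assoc]

/-- Extract the state/output sequence of a finite run. -/
lemma finRun_seq {q q' : T.Q} {u : List A} {α : List B} (h : T.FinRun q u α q') :
    ∃ (s : ℕ → T.Q) (γ : ℕ → List B), s 0 = q ∧ (∀ i, u.length ≤ i → s i = q') ∧
      (∀ i (hi : i < u.length), T.trans (s i) (u.get ⟨i, hi⟩) (s (i+1))) ∧
      (∀ i (hi : i < u.length), T.out (s i) (u.get ⟨i, hi⟩) (s (i+1)) = γ i) ∧
      α = ((List.range u.length).map γ).flatten := by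
  induction h with
  | nil q =>
    exact ⟨fun _ => q, fun _ => [], rfl, fun _ _ => rfl, fun i hi => by simp at hi,
      fun i hi => by simp at hi, by simp⟩
  | @cons q qm q'' a u α htr hrun ih =>
    obtain ⟨s', γ', h0, hend, htrs, houts, hα⟩ := ih
    refine ⟨fun i => match i with | 0 => q | (j+1) => s' j,
      fun i => match i with | 0 => T.out q a qm | (j+1) => γ' j, rfl, ?_, ?_, ?_, ?_⟩
    · intro i hi
      match i with
      | 0 => simp at hi
      | (j+1) => exact hend j (by simp at hi; omega)
    · intro i hi
      match i with
      | 0 => show T.trans q a (s' 0); rw [h0]; exact htr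
      | (j+1) => exact htrs j (by simp at hi; omega)
    · intro i hi
      match i with
      | 0 => show T.out q a (s' 0) = T.out q a qm; rw [h0]
      | (j+1) => exact houts j (by simp at hi; omega)
    · rw [show (a::u).length = u.length + 1 by simp, List.range_succ_eq_map]
      simp only [List.map_cons, List.map_map, List.flatten_cons]
      congr 1

lemma loop_run {p : T.Q} {v : List A} {β : List B} (h : T.FinRun p v β p) (hv : v ≠ []) :
    ∃ (X : ℕ → A) (S : ℕ → T.Q), T.IsRun X S ∧ (∀ k, S (k * v.length) = p) ∧
      (∀ k, T.outPrefix X S (k * v.length) = powList β k) ∧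
      (∀ k i (hi : i < (powList v k).length), (powList v k).get ⟨i, hi⟩ = X i) := by
  have hm : 0 < v.length := List.length_pos_iff.mpr hv
  obtain ⟨s, γ, h0, hend, htrs, houts, hα⟩ := T.finRun_seq h
  set m := v.length with hmdef
  refine ⟨fun i => v.get ⟨i % m, Nat.mod_lt _ hm⟩, fun i => s (i % m), ?_, ?_, ?_, ?_⟩
  case _ =>
    have key2 : ∀ i, s ((i+1) % m) = s (i % m + 1) := by
      intro i
      rw [Nat.add_mod i 1 m, Nat.add_mod_mod]
      rcases Nat.lt_or_ge (i % m + 1) m with h' | h'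
      · rw [Nat.mod_eq_of_lt h']
      · have hh : i % m + 1 = m := by have := Nat.mod_lt i hm; omega
        rw [hh, Nat.mod_self, h0, hend m le_rfl]
    intro i
    show T.trans (s (i % m)) _ (s ((i+1) % m))
    rw [key2]
    exact htrs (i % m) (Nat.mod_lt _ hm)
  case _ =>
    intro k; show s (k * m % m) = p; rw [Nat.mul_mod_left, h0]
  case _ =>
    have key2 : ∀ i, s ((i+1) % m) = s (i % m + 1) := by
      intro i
      rw [Nat.add_mod i 1 m, Nat.add_mod_mod]
      rcases Nat.lt_or_ge (i % m + 1) m with h' | h'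
      · rw [Nat.mod_eq_of_lt h']
      · have hh : i % m + 1 = m := by have := Nat.mod_lt i hm; omega
        rw [hh, Nat.mod_self, h0, hend m le_rfl]
    have hterm : ∀ i, T.out (s (i % m)) (v.get ⟨i % m, Nat.mod_lt _ hm⟩) (s ((i+1) % m))
        = γ (i % m) := by
      intro i; rw [key2]; exact houts (i % m) (Nat.mod_lt _ hm)
    intro k
    induction k with
    | zero => rw [Nat.zero_mul, T.outPrefix_zero, powList_zero]
    | succ k ih =>
      rw [Nat.succ_mul, T.outPrefix_add, ih, powList_succ']
      congr 1
      have hmap : ∀ i ∈ List.range m,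
          T.out (s ((k*m+i) % m)) (v.get ⟨(k*m+i) % m, Nat.mod_lt _ hm⟩) (s ((k*m+i+1) % m))
            = γ i := by
        intro i hi
        rw [hterm (k*m+i), mul_comm k m, Nat.mul_add_mod,
          Nat.mod_eq_of_lt (List.mem_range.mp hi)]
      rw [List.map_congr_left hmap, ← hα]
  case _ =>
    intro k i hi
    exact powList_get v k i hi

lemma outPrefix_shift (x : ℕ → A) (ρ : ℕ → T.Q) (i₀ n : ℕ) :
    T.outPrefix x ρ (i₀ + n) = T.outPrefix x ρ i₀ ++
      T.outPrefix (fun j => x (i₀ + j)) (fun j => ρ (i₀ + j)) n := by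
  rw [outPrefix_add]; rfl

lemma exists_outEq {x : ℕ → A} {ρ : ℕ → T.Q} (h : T.InfiniteOutput x ρ) :
    ∃ y : ℕ → B, T.OutEq x ρ y := by
  choose N hN using h
  refine ⟨fun i => (T.outPrefix x ρ (N (i+1))).get ⟨i, by have := hN (i+1); omega⟩, ?_⟩
  intro n i hi
  simp only [List.get_eq_getElem]
  have h1 := (T.outPrefix_prefix x ρ (le_max_left n (N (i+1)))).getElem hi
  have h2 := (T.outPrefix_prefix x ρ (le_max_right n (N (i+1)))).getElem
    (show i < (T.outPrefix x ρ (N (i+1))).length by have := hN (i+1); omega)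
  rw [h1, ← h2]

end NT

end AuxContinuityLoops

/-- Continuity lemma on loops of a 1-nT computing a continuous function. -/
theorem continuity_loops
    {A B : Type} [Fintype A] [Fintype B]
    (T : NT A B) (f : (ℕ → A) → Option (ℕ → B))
    (hU : T.Unambiguous) (hCl : T.Clean) (hTr : T.Trim)
    (hT : T.Computes f) (hcont : ContinuousPartial f)
    (q₁ q₂ q₁' q₂' : T.Q) (hq₁ : q₁ ∈ T.I) (hq₂ : q₂ ∈ T.I) (hq₁' : q₁' ∈ T.F)
    (u u' : List A) (hu' : u' ≠ [])
    (α₁ α₁' α₂ α₂' : List B)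
    (h₁ : T.FinRun q₁ u α₁ q₁') (h₁' : T.FinRun q₁' u' α₁' q₁')
    (h₂ : T.FinRun q₂ u α₂ q₂') (h₂' : T.FinRun q₂' u' α₂' q₂') :
    α₁' ≠ [] ∧
    (α₂' ≠ [] → ∃ y : ℕ → B, EqUVomega α₁ α₁' y ∧ EqUVomega α₂ α₂' y) ∧
    (α₂' = [] → ∀ (x : ℕ → A) (ρ : ℕ → T.Q) (β : ℕ → B),
      T.IsRun x ρ → ρ 0 = q₂' → T.Final ρ →
      T.InfiniteOutput x ρ → T.OutEq x ρ β →
      EqUVomega α₁ α₁' (listPrepend α₂ β)) := by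
  have hm : 0 < u'.length := List.length_pos_iff.mpr hu'
  -- the accepting run on u(u')^ω through q₁'
  obtain ⟨X₁, S₁, hrun₁, hS₁, hout₁, hget₁⟩ := T.loop_run h₁' hu'
  have hS₁0 : S₁ 0 = q₁' := by have := hS₁ 0; rwa [Nat.zero_mul] at this
  obtain ⟨σ₁, hσrun, hσ0, hσidx, hσout⟩ := T.prepend_run h₁ X₁ S₁ hrun₁ hS₁0
  set xstar := listPrepend u X₁ with hxstar
  have accept₁ : T.Accepting xstar σ₁ := by
    refine ⟨hσrun, by rw [hσ0]; exact hq₁, ?_⟩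
    intro i
    refine ⟨u.length + i * u'.length, ?_, ?_⟩
    · have := Nat.le_mul_of_pos_right i hm; omega
    · rw [hσidx (i * u'.length), hS₁ i]; exact hq₁'
  have hio₁ : T.InfiniteOutput xstar σ₁ := hCl xstar σ₁ accept₁
  -- part 1
  have hne : α₁' ≠ [] := by
    intro hnil
    obtain ⟨n, hn⟩ := hio₁ (α₁.length + 1)
    have h1 : n ≤ u.length + n * u'.length := by
      have := Nat.le_mul_of_pos_right n hm; omega
    have h2 := T.outPrefix_length_le xstar σ₁ h1
    rw [hσout (n * u'.length), hout₁ n, hnil,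
      show powList ([] : List B) n = [] by simp [powList], List.append_nil] at h2
    omega
  obtain ⟨ystar, houteq₁⟩ := T.exists_outEq hio₁
  have fxeq : f xstar = some ystar := (hT xstar ystar).mpr ⟨σ₁, accept₁, hio₁, houteq₁⟩
  have hEq1 : EqUVomega α₁ α₁' ystar := by
    intro n
    have := houteq₁ (u.length + n * u'.length)
    rwa [hσout (n * u'.length), hout₁ n] at this
  -- input agreement between xstar and u (u')^k z
  have hagree : ∀ (k : ℕ) (z : ℕ → A) (i : ℕ), i < u.length + k * u'.length →
      xstar i = listPrepend (u ++ powList u' k) z i := by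
    intro k z i hi
    have hlen : i < (u ++ powList u' k).length := by
      rw [List.length_append, powList_length]; omega
    rcases Nat.lt_or_ge i u.length with h' | h'
    · rw [hxstar, listPrepend_lt h', listPrepend_lt hlen]
      simp only [List.get_eq_getElem]
      exact (List.getElem_append_left h').symm
    · rw [hxstar, listPrepend_ge h', listPrepend_lt hlen]
      simp only [List.get_eq_getElem]
      rw [List.getElem_append_right h']
      have h2 : i - u.length < (powList u' k).length := by rw [powList_length]; omega
      have h3 := hget₁ k (i - u.length) h2
      simp only [List.get_eq_getElem] at h3
      exact h3.symm
  -- building accepting runs on u (u')^k z for final runs z from q₂'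
  have hbuild : ∀ (k : ℕ) (z : ℕ → A) (τ0 : ℕ → T.Q), T.IsRun z τ0 → τ0 0 = q₂' →
      T.Final τ0 → T.InfiniteOutput z τ0 →
      ∃ w, f (listPrepend (u ++ powList u' k) z) = some w ∧
        ∀ n, PrefixOf ((α₂ ++ powList α₂' k) ++ T.outPrefix z τ0 n) w := by
    intro k z τ0 hzrun hz0 hzfin hzio
    have hfr : T.FinRun q₂ (u ++ powList u' k) (α₂ ++ powList α₂' k) q₂' :=
      T.finRun_append h₂ (T.finRun_pow h₂' k)
    obtain ⟨τ, hτrun, hτ0, hτidx, hτout⟩ := T.prepend_run hfr z τ0 hzrun hz0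
    have hacc : T.Accepting (listPrepend (u ++ powList u' k) z) τ := by
      refine ⟨hτrun, by rw [hτ0]; exact hq₂, ?_⟩
      intro i
      obtain ⟨j, hj, hjF⟩ := hzfin i
      exact ⟨(u ++ powList u' k).length + j, by omega, by rw [hτidx j]; exact hjF⟩
    have hio : T.InfiniteOutput (listPrepend (u ++ powList u' k) z) τ := by
      intro M
      obtain ⟨n, hn⟩ := hzio M
      refine ⟨(u ++ powList u' k).length + n, ?_⟩
      rw [hτout n]; simp only [List.length_append]; omega
    obtain ⟨w, hw⟩ := T.exists_outEq hio
    refine ⟨w, (hT _ w).mpr ⟨τ, hacc, hio, hw⟩, fun n => ?_⟩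
    have := hw ((u ++ powList u' k).length + n)
    rwa [hτout n] at this
  refine ⟨hne, ?_, ?_⟩
  · -- part 2
    intro _
    refine ⟨ystar, hEq1, ?_⟩
    obtain ⟨x', ρ', hacc', i₀, hi₀⟩ := hTr q₂'
    have hzrun : T.IsRun (fun j => x' (i₀ + j)) (fun j => ρ' (i₀ + j)) :=
      fun j => hacc'.1 (i₀ + j)
    have hz0 : (fun j => ρ' (i₀ + j)) 0 = q₂' := hi₀
    have hzfin : T.Final (fun j => ρ' (i₀ + j)) := by
      intro i
      obtain ⟨j, hj, hF⟩ := hacc'.2.2 (i₀ + i)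
      refine ⟨j - i₀, by omega, ?_⟩
      show ρ' (i₀ + (j - i₀)) ∈ T.F
      rw [show i₀ + (j - i₀) = j by omega]; exact hF
    have hzio : T.InfiniteOutput (fun j => x' (i₀ + j)) (fun j => ρ' (i₀ + j)) := by
      intro M
      obtain ⟨n, hn⟩ := hCl x' ρ' hacc' (M + (T.outPrefix x' ρ' i₀).length)
      refine ⟨n, ?_⟩
      have hmono := T.outPrefix_length_le x' ρ' (show n ≤ i₀ + n by omega)
      have hsh := T.outPrefix_shift x' ρ' i₀ n
      have := congrArg List.length hsh
      simp only [List.length_append] at this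
      omega
    intro n
    obtain ⟨p, hp⟩ := hcont xstar ystar fxeq (α₂ ++ powList α₂' n).length
    set k := max n p with hk
    obtain ⟨w, hfw, hwpre⟩ := hbuild k _ _ hzrun hz0 hzfin hzio
    have hyw := hp _ w hfw (fun i hi => hagree k _ i (by
      have h1 : p ≤ k := le_max_right n p
      have h2 : k ≤ k * u'.length := Nat.le_mul_of_pos_right k hm
      omega))
    have h1 : PrefixOf (α₂ ++ powList α₂' k) w := by
      have := hwpre 0
      rwa [T.outPrefix_zero, List.append_nil] at this
    have h2 : PrefixOf (α₂ ++ powList α₂' n) w := by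
      refine prefixOf_of_isPrefix ?_ h1
      obtain ⟨t, ht⟩ := powList_prefix α₂' (le_max_left n p)
      exact ⟨t, by rw [List.append_assoc, ht]⟩
    exact prefixOf_of_agree h2 (fun i hi => (hyw i hi).symm)
  · -- part 3
    intro hα₂' x ρ β hρrun hρ0 hρfin hρio hρout n
    obtain ⟨p, hp⟩ := hcont xstar ystar fxeq (α₁ ++ powList α₁' n).length
    obtain ⟨w, hfw, hwpre⟩ := hbuild p _ _ hρrun hρ0 hρfin hρio
    have hyw := hp _ w hfw (fun i hi => hagree p _ i (by
      have h2 : p ≤ p * u'.length := Nat.le_mul_of_pos_right p hm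
      omega))
    obtain ⟨n', hn'⟩ := hρio (α₁ ++ powList α₁' n).length
    have hwp : PrefixOf (α₂ ++ T.outPrefix x ρ n') w := by
      have := hwpre n'
      rwa [hα₂', show powList ([] : List B) p = [] by simp [powList], List.append_nil]
        at this
    have htgt : PrefixOf (α₂ ++ T.outPrefix x ρ n') (listPrepend α₂ β) :=
      prefixOf_append_prepend (hρout n')
    refine prefixOf_of_agree (hEq1 n) ?_
    intro i hiL
    have hi2 : i < (α₂ ++ T.outPrefix x ρ n').length := by
      simp only [List.length_append]; omega
    calc ystar i = w i := hyw i hiL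
      _ = (α₂ ++ T.outPrefix x ρ n').get ⟨i, hi2⟩ := (hwp i hi2).symm
      _ = listPrepend α₂ β i := htgt i hi2
end

section
/- Given an unambiguous, clean and trim 1-nT computing a continuous partial function f : A^ω ⇀ B^ω, there exists an unambiguous, clean, trim and productive 1-nT computing the same partial function f. -/
namespace NT

variable {A B : Type}

/-- Productivity of a (clean) 1-nT. -/
def Productive (T : NT A B) : Prop :=
  ∀ (q₁ q₂ q₁' q₂' : T.Q) (u u' : List A) (α₁ α₁' α₂ α₂' : List B),
    q₁ ∈ T.I → q₂ ∈ T.I → q₁' ∈ T.F → u' ≠ [] →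
    T.FinRun q₁ u α₁ q₁' → T.FinRun q₁' u' α₁' q₁' →
    T.FinRun q₂ u α₂ q₂' → T.FinRun q₂' u' α₂' q₂' →
    α₂' ≠ []

end NT
namespace Aux
open Classical
attribute [local instance] Classical.propDecidable

variable {A B : Type}

/-- first n letters of an infinite word -/
def firstN (y : ℕ → B) (n : ℕ) : List B := (List.range n).map y

@[simp] lemma firstN_length (y : ℕ → B) (n : ℕ) : (firstN y n).length = n := by
  simp [firstN]

lemma firstN_getElem (y : ℕ → B) (n i : ℕ) (h : i < (firstN y n).length) :
    (firstN y n)[i] = y i := by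
  simp [firstN]

lemma prefixOf_def (u : List B) (y : ℕ → B) :
    PrefixOf u y ↔ ∀ (i : ℕ) (h : i < u.length), u[i] = y i := by
  simp [PrefixOf, List.get_eq_getElem]

lemma prefixOf_iff_firstN (u : List B) (y : ℕ → B) :
    PrefixOf u y ↔ u = firstN y u.length := by
  rw [prefixOf_def]
  constructor
  · intro h
    apply List.ext_getElem (by simp)
    intro i h1 h2
    rw [firstN_getElem]
    exact h i h1
  · intro h i hi
    have h2 := List.getElem_of_eq h hi
    rw [h2, firstN_getElem]

lemma firstN_add (y : ℕ → B) (m k : ℕ) :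
    firstN y (m + k) = firstN y m ++ firstN (fun i => y (m + i)) k := by
  induction k with
  | zero => simp [firstN]
  | succ k ih =>
      have : m + (k+1) = (m+k) + 1 := by omega
      rw [this]
      simp only [firstN, List.range_succ, List.map_append, List.map_singleton] at *
      rw [ih]
      simp

lemma prefixOf_firstN (y : ℕ → B) (n : ℕ) : PrefixOf (firstN y n) y := by
  rw [prefixOf_iff_firstN]; simp

lemma prefixOf_of_prefix {u v : List B} {y : ℕ → B} (h : u <+: v) (hv : PrefixOf v y) :
    PrefixOf u y := by
  rw [prefixOf_def] at hv ⊢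
  intro i hi
  obtain ⟨w, rfl⟩ := h
  have hlt : i < (u ++ w).length := by simp; omega
  have h2 := hv i hlt
  rw [← h2, List.getElem_append_left hi]

end Aux
namespace Aux
variable {A B : Type}

lemma listPrepend_lt (u : List B) (y : ℕ → B) (i : ℕ) (h : i < u.length) :
    listPrepend u y i = u[i] := by
  simp [listPrepend, h, List.get_eq_getElem]

lemma listPrepend_ge (u : List B) (y : ℕ → B) (i : ℕ) (h : u.length ≤ i) :
    listPrepend u y i = y (i - u.length) := by
  have : ¬ i < u.length := by omega
  simp [listPrepend, this]

lemma listPrepend_add (u : List B) (y : ℕ → B) (i : ℕ) :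
    listPrepend u y (u.length + i) = y i := by
  rw [listPrepend_ge u y _ (by omega)]
  congr 1; omega

@[simp] lemma powList_zero (v : List B) : powList v 0 = [] := by simp [powList]

lemma powList_succ' (v : List B) (n : ℕ) : powList v (n+1) = powList v n ++ v := by
  simp [powList, List.replicate_succ']

@[simp] lemma powList_length (v : List B) (n : ℕ) : (powList v n).length = n * v.length := by
  induction n with
  | zero => simp
  | succ n ih => rw [powList_succ']; simp [ih]; ring

@[simp] lemma powList_nil (n : ℕ) : powList ([] : List B) n = [] := by
  induction n with
  | zero => simp
  | succ n ih => rw [powList_succ', ih]; simp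

lemma powList_getElem (v : List B) (n i : ℕ) (h : i < (powList v n).length) :
    (powList v n)[i] = v[i % v.length]'(by
      apply Nat.mod_lt
      rcases Nat.eq_zero_or_pos v.length with h0 | h0
      · simp only [powList_length] at h
        rw [h0, Nat.mul_zero] at h
        omega
      · exact h0) := by
  induction n with
  | zero => simp at h
  | succ n ih =>
      have h2 : i < (powList v n).length + v.length := by
        simp at h ⊢
        have := add_one_mul n v.length
        omega
      rw [List.getElem_of_eq (powList_succ' v n) h]
      rcases Nat.lt_or_ge i (powList v n).length with hlt | hge
      · rw [List.getElem_append_left hlt, ih hlt]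
      · rw [List.getElem_append_right hge]
        have hL : (powList v n).length = n * v.length := powList_length v n
        have hr : i - n * v.length < v.length := by
          simp at h
          have := add_one_mul n v.length
          omega
        congr 1
        have h3 : i % v.length = i - n * v.length := by
          conv_lhs => rw [show i = v.length * n + (i - n * v.length) by
            have := Nat.mul_comm n v.length
            omega]
          rw [Nat.mul_add_mod, Nat.mod_eq_of_lt hr]
        rw [hL, h3]

end Aux
namespace Aux
variable {A B : Type}

lemma getD_eq_getElem (v : List B) (d : B) (j : ℕ) (h : j < v.length) :
    v.getD j d = v[j] := by
  simp [List.getD_eq_getElem?_getD, List.getElem?_eq_getElem h]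

/-- purely periodic infinite word -/
def perWord (v : List B) (d : B) : ℕ → B := fun i => v.getD (i % v.length) d

/-- ultimately periodic word u·v^ω -/
def upWord (u v : List B) (d : B) : ℕ → B := listPrepend u (perWord v d)

lemma perWord_period (v : List B) (d : B) (i : ℕ) :
    perWord v d (i + v.length) = perWord v d i := by
  simp [perWord, Nat.add_mod_right]

lemma upWord_period (u v : List B) (d : B) (j : ℕ) (hj : u.length ≤ j) :
    upWord u v d (j + v.length) = upWord u v d j := by
  rw [upWord, listPrepend_ge _ _ _ (by omega), listPrepend_ge _ _ _ hj]
  have h2 : j + v.length - u.length = (j - u.length) + v.length := by omega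
  rw [h2, perWord_period]

lemma prefixOf_append_pow (u v : List B) (d : B) (c : ℕ) :
    PrefixOf (u ++ powList v c) (upWord u v d) := by
  rw [prefixOf_def]
  intro i hi
  simp only [List.length_append, powList_length] at hi
  rcases Nat.lt_or_ge i u.length with h | h
  · rw [List.getElem_append_left h, upWord, listPrepend_lt _ _ _ h]
  · have hi' : i - u.length < (powList v c).length := by simp; omega
    rw [List.getElem_append_right h, powList_getElem _ _ _ hi']
    rw [upWord, listPrepend_ge _ _ _ h]
    rw [perWord, getD_eq_getElem]

end Aux
namespace Aux
variable {A B : Type} (T : NT A B)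

@[simp] lemma outPrefix_zero (x : ℕ → A) (ρ : ℕ → T.Q) : T.outPrefix x ρ 0 = [] := by
  simp [NT.outPrefix]

lemma outPrefix_succ (x : ℕ → A) (ρ : ℕ → T.Q) (n : ℕ) :
    T.outPrefix x ρ (n+1) = T.outPrefix x ρ n ++ T.out (ρ n) (x n) (ρ (n+1)) := by
  simp [NT.outPrefix, List.range_succ]

lemma outPrefix_prefix (x : ℕ → A) (ρ : ℕ → T.Q) {m n : ℕ} (h : m ≤ n) :
    T.outPrefix x ρ m <+: T.outPrefix x ρ n := by
  induction n with
  | zero =>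
      have : m = 0 := by omega
      simp [this]
  | succ n ih =>
      rcases Nat.lt_or_ge m (n+1) with h2 | h2
      · exact (ih (by omega)).trans (by rw [outPrefix_succ]; exact List.prefix_append _ _)
      · have : m = n + 1 := by omega
        simp [this]

lemma outPrefix_shift (x : ℕ → A) (ρ : ℕ → T.Q) (m j : ℕ) :
    T.outPrefix x ρ (m + j) =
      T.outPrefix x ρ m ++ T.outPrefix (fun i => x (m+i)) (fun i => ρ (m+i)) j := by
  induction j with
  | zero => simp
  | succ j ih =>
      have h1 : m + (j + 1) = (m + j) + 1 := by omega
      rw [h1, outPrefix_succ, ih, outPrefix_succ, List.append_assoc]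
      have h2 : m + j + 1 = m + (j + 1) := by omega
      simp [h2]

lemma outEq_firstN {x : ℕ → A} {ρ : ℕ → T.Q} {y : ℕ → B} (h : T.OutEq x ρ y) (n : ℕ) :
    T.outPrefix x ρ n = firstN y (T.outPrefix x ρ n).length :=
  (prefixOf_iff_firstN _ _).1 (h n)

lemma exists_outWord [Inhabited B] {x : ℕ → A} {ρ : ℕ → T.Q}
    (h : T.InfiniteOutput x ρ) : ∃ y : ℕ → B, T.OutEq x ρ y := by
  classical
  have hn : ∀ i : ℕ, ∃ n, i < (T.outPrefix x ρ n).length := by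
    intro i
    obtain ⟨n, hn⟩ := h (i+1)
    exact ⟨n, by omega⟩
  refine ⟨fun i => (T.outPrefix x ρ (hn i).choose)[i]'(hn i).choose_spec, ?_⟩
  intro n
  rw [prefixOf_def]
  intro i hi
  rcases Nat.le_total n (hn i).choose with h2 | h2
  · exact (outPrefix_prefix T x ρ h2).getElem hi
  · exact ((outPrefix_prefix T x ρ h2).getElem (hn i).choose_spec).symm

lemma outEq_unique {x : ℕ → A} {ρ : ℕ → T.Q} {y y' : ℕ → B}
    (h : T.OutEq x ρ y) (h' : T.OutEq x ρ y') (hinf : T.InfiniteOutput x ρ) : y = y' := by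
  funext i
  obtain ⟨n, hn⟩ := hinf (i+1)
  have hi : i < (T.outPrefix x ρ n).length := by omega
  have e1 := (prefixOf_def _ _).1 (h n) i hi
  have e2 := (prefixOf_def _ _).1 (h' n) i hi
  rw [← e1, e2]

/-- agreement of two words on all prefixes of unbounded length implies equality -/
lemma eq_of_prefix_agree {y y' : ℕ → B} (h : ∀ m : ℕ, ∃ n, m ≤ n ∧ firstN y n = firstN y' n) :
    y = y' := by
  funext i
  obtain ⟨n, hin, he⟩ := h (i+1)
  have h1 : i < (firstN y n).length := by simp; omega
  have := List.getElem_of_eq he h1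
  rw [firstN_getElem] at this
  rw [this, firstN_getElem]

end Aux
namespace Aux
variable {A B : Type} (T : NT A B)

lemma finRun_nil_inv {q q' : T.Q} {α : List B} (h : T.FinRun q [] α q') :
    q' = q ∧ α = [] := by
  cases h; exact ⟨rfl, rfl⟩

lemma finRun_cons_inv {q q'' : T.Q} {a : A} {u : List A} {α : List B}
    (h : T.FinRun q (a :: u) α q'') :
    ∃ q' β, T.trans q a q' ∧ T.FinRun q' u β q'' ∧ α = T.out q a q' ++ β := by
  cases h with
  | cons ht hr => exact ⟨_, _, ht, hr, rfl⟩

lemma finRun_append {q q' q'' : T.Q} {u v : List A} {α β : List B}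
    (h1 : T.FinRun q u α q') (h2 : T.FinRun q' v β q'') :
    T.FinRun q (u ++ v) (α ++ β) q'' := by
  induction h1 with
  | nil => simpa using h2
  | cons ht hr ih =>
      rw [List.cons_append, List.append_assoc]
      exact NT.FinRun.cons ht (ih h2)

lemma finRun_pow {q : T.Q} {v : List A} {β : List B} (h : T.FinRun q v β q) (n : ℕ) :
    T.FinRun q (powList v n) (powList β n) q := by
  induction n with
  | zero => simpa using NT.FinRun.nil q
  | succ n ih =>
      rw [powList_succ', powList_succ']
      exact finRun_append T ih h

lemma outPrefix_congr {x x' : ℕ → A} {ρ ρ' : ℕ → T.Q} (n : ℕ)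
    (hρ : ∀ i ≤ n, ρ i = ρ' i) (hx : ∀ i < n, x i = x' i) :
    T.outPrefix x ρ n = T.outPrefix x' ρ' n := by
  induction n with
  | zero => simp
  | succ n ih =>
      rw [outPrefix_succ, outPrefix_succ,
        ih (fun i hi => hρ i (by omega)) (fun i hi => hx i (by omega)),
        hρ n (by omega), hρ (n+1) (by omega), hx n (by omega)]

lemma finRun_path [Inhabited A] {q q' : T.Q} {u : List A} {α : List B}
    (h : T.FinRun q u α q') :
    ∃ p : ℕ → T.Q, p 0 = q ∧ p u.length = q' ∧
      (∀ i < u.length, T.trans (p i) (u.getD i default) (p (i+1))) ∧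
      T.outPrefix (fun i => u.getD i default) p u.length = α := by
  induction h with
  | nil q => exact ⟨fun _ => q, rfl, rfl, by simp, by simp⟩
  | @cons q t q'' a u α ht hr ih =>
      obtain ⟨p', hp0, hpl, hptr, hpout⟩ := ih
      refine ⟨fun i => match i with | 0 => q | (j+1) => p' j, rfl, ?_, ?_, ?_⟩
      · simpa using hpl
      · intro i hi
        match i with
        | 0 => simpa [hp0] using ht
        | (j+1) =>
            simp only [List.getD_cons_succ]
            exact hptr j (by simpa using hi)
      · have hlen : (a :: u).length = 1 + u.length := by simp; omega
        rw [hlen, outPrefix_shift]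
        have e1 : T.outPrefix (fun i => (a :: u).getD i default)
            (fun i => match i with | 0 => q | (j+1) => p' j) 1 = T.out q a t := by
          rw [show (1 : ℕ) = 0 + 1 from rfl, outPrefix_succ]
          simp [hp0]
        have e2 : (fun i => (a :: u).getD (1 + i) default) = (fun i => u.getD i default) := by
          funext i
          rw [show 1 + i = i + 1 by omega]
          simp
        have e3 : (fun i => (match (1 + i : ℕ) with | 0 => q | (j+1) => p' j : T.Q)) = p' := by
          funext i
          rw [show 1 + i = i + 1 by omega]
        rw [e1]
        have e4 : T.outPrefix (fun i => (a :: u).getD (1 + i) default)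
            (fun i => match (1 + i : ℕ) with | 0 => q | (j+1) => p' j) u.length = α := by
          rw [e2]
          conv_lhs => rw [show (fun i => (match (1 + i : ℕ) with | 0 => q | (j+1) => p' j : T.Q)) = p' from e3]
          exact hpout
        rw [e4]

end Aux
namespace Aux
variable {A B : Type} (T : NT A B)

lemma listPrepend_getD [Inhabited A] (u : List A) (z : ℕ → A) (i : ℕ) (h : i < u.length) :
    listPrepend u z i = u.getD i default := by
  rw [listPrepend_lt _ _ _ h, getD_eq_getElem _ _ _ h]

lemma run_prepend [Inhabited A] {q q' : T.Q} {u : List A} {α : List B}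
    (h : T.FinRun q u α q') (z : ℕ → A) (σ : ℕ → T.Q) (hσ0 : σ 0 = q')
    (hσ : T.IsRun z σ) :
    ∃ ρ : ℕ → T.Q, ρ 0 = q ∧ T.IsRun (listPrepend u z) ρ ∧
      (∀ m, ρ (u.length + m) = σ m) ∧
      (∀ m, T.outPrefix (listPrepend u z) ρ (u.length + m) = α ++ T.outPrefix z σ m) := by
  obtain ⟨p, hp0, hpl, hptr, hpout⟩ := finRun_path T h
  set L := u.length with hL
  refine ⟨fun i => if i < L then p i else σ (i - L), ?_, ?_, ?_, ?_⟩
  · show (if 0 < L then p 0 else σ (0 - L)) = q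
    rcases Nat.lt_or_ge 0 L with h0 | h0
    · rw [if_pos h0, hp0]
    · have hL0 : L = 0 := by omega
      rw [if_neg (by omega), show 0 - L = 0 by omega, hσ0, ← hpl, hL0, hp0]
  · intro i
    show T.trans (if i < L then p i else σ (i - L)) (listPrepend u z i)
        (if i + 1 < L then p (i+1) else σ (i + 1 - L))
    rcases Nat.lt_or_ge (i+1) L with h1 | h1
    · have h2 : i < L := by omega
      rw [if_pos h2, if_pos h1, listPrepend_getD _ _ _ h2]
      exact hptr i h2
    · rcases Nat.lt_or_ge i L with h2 | h2
      · have h3 : i + 1 = L := by omega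
        rw [if_pos h2, if_neg (by omega), listPrepend_getD _ _ _ h2,
          show i + 1 - L = 0 by omega, hσ0, ← hpl, ← h3]
        exact hptr i h2
      · rw [if_neg (by omega), if_neg (by omega), listPrepend_ge _ _ _ h2,
          show i + 1 - L = (i - L) + 1 by omega]
        exact hσ (i - L)
  · intro m
    show (if L + m < L then p (L + m) else σ (L + m - L)) = σ m
    rw [if_neg (by omega), show L + m - L = m by omega]
  · intro m
    rw [outPrefix_shift]
    have e0 : T.outPrefix (listPrepend u z) (fun i => if i < L then p i else σ (i - L)) L = α := by
      rw [← hpout]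
      apply outPrefix_congr
      · intro i hi
        show (if i < L then p i else σ (i - L)) = p i
        rcases Nat.lt_or_ge i L with h1 | h1
        · rw [if_pos h1]
        · have h2 : i = L := by omega
          rw [if_neg (by omega), h2, show (L:ℕ) - L = 0 by omega, hσ0, hpl]
      · intro i hi
        exact listPrepend_getD _ _ _ hi
    rw [e0]
    congr 1
    apply outPrefix_congr
    · intro i _
      show (if L + i < L then p (L + i) else σ (L + i - L)) = σ i
      rw [if_neg (by omega), show L + i - L = i by omega]
    · intro i _
      show listPrepend u z (L + i) = z i
      rw [listPrepend_ge _ _ _ (by omega), show L + i - L = i by omega]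

lemma run_loop [Inhabited A] {q : T.Q} {v : List A} {β : List B} (hv : v ≠ [])
    (h : T.FinRun q v β q) :
    ∃ σ : ℕ → T.Q, σ 0 = q ∧ T.IsRun (perWord v default) σ ∧
      (∀ c : ℕ, σ (c * v.length) = q) ∧
      (∀ c : ℕ, T.outPrefix (perWord v default) σ (c * v.length) = powList β c) := by
  obtain ⟨p, hp0, hpl, hptr, hpout⟩ := finRun_path T h
  set L := v.length with hL
  have hLpos : 0 < L := by
    rw [hL]; exact List.length_pos_iff.2 hv
  refine ⟨fun i => p (i % L), by simp [Nat.zero_mod, hp0], ?_, ?_, ?_⟩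
  · intro i
    have hmod : i % L < L := Nat.mod_lt _ hLpos
    have hsucc : (i+1) % L = (i % L + 1) % L := by
      conv_lhs => rw [show i + 1 = L * (i / L) + (i % L + 1) by
        have := Nat.div_add_mod i L; omega]
      rw [Nat.mul_add_mod]
    show T.trans (p (i % L)) (perWord v default i) (p ((i+1) % L))
    have hin : perWord v default i = v.getD (i % L) default := rfl
    rcases Nat.lt_or_ge (i % L + 1) L with h1 | h1
    · rw [hsucc, Nat.mod_eq_of_lt h1, hin]
      exact hptr _ hmod
    · have h2 : i % L + 1 = L := by omega
      rw [hsucc, h2, Nat.mod_self, hin]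
      have h5 := hptr _ hmod
      rw [h2, hpl, ← hp0] at h5
      exact h5
  · intro c
    show p ((c * L) % L) = q
    rw [Nat.mul_comm, Nat.mul_mod_right, hp0]
  · intro c
    induction c with
    | zero => simp
    | succ c ih =>
        rw [add_one_mul, outPrefix_shift, ih, powList_succ']
        congr 1
        rw [← hpout]
        apply outPrefix_congr
        · intro i hi
          show p ((c * L + i) % L) = p i
          rcases Nat.lt_or_ge i L with h1 | h1
          · rw [show (c * L + i) % L = i from by
              rw [Nat.mul_comm c L, Nat.mul_add_mod]; exact Nat.mod_eq_of_lt h1]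
          · have hiL : i = L := by omega
            rw [hiL, show (c * L + L) % L = 0 from by
              rw [show c * L + L = (c+1) * L by ring, Nat.mul_comm, Nat.mul_mod_right],
              hp0, hpl]
        · intro i hi
          show perWord v default (c * L + i) = v.getD i default
          show v.getD ((c * L + i) % v.length) default = v.getD i default
          rw [show (c * L + i) % v.length = i from by
            rw [← hL, Nat.mul_comm c L, Nat.mul_add_mod]; exact Nat.mod_eq_of_lt hi]

lemma run_pump [Inhabited A] {q q' : T.Q} {u v : List A} {α β : List B} (hv : v ≠ [])
    (h1 : T.FinRun q u α q') (h2 : T.FinRun q' v β q') :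
    ∃ ρ : ℕ → T.Q, ρ 0 = q ∧ T.IsRun (listPrepend u (perWord v default)) ρ ∧
      (∀ c : ℕ, ρ (u.length + c * v.length) = q') ∧
      (∀ c : ℕ, T.outPrefix (listPrepend u (perWord v default)) ρ (u.length + c * v.length)
          = α ++ powList β c) := by
  obtain ⟨σ, hσ0, hσrun, hσst, hσout⟩ := run_loop T hv h2
  obtain ⟨ρ, hρ0, hρrun, hρst, hρout⟩ := run_prepend T h1 (perWord v default) σ hσ0 hσrun
  exact ⟨ρ, hρ0, hρrun, fun c => by rw [hρst, hσst],
    fun c => by rw [hρout, hσout]⟩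

end Aux
namespace Aux
variable {A B : Type} (T : NT A B)

/-- final run from `q` with infinite output `y` -/
def TailOut (q : T.Q) (y : ℕ → B) : Prop :=
  ∃ z σ, σ 0 = q ∧ T.IsRun z σ ∧ T.Final σ ∧ T.InfiniteOutput z σ ∧ T.OutEq z σ y

/-- all final runs from `q` have the same output -/
def Blind (q : T.Q) : Prop :=
  ∀ y y', TailOut T q y → TailOut T q y' → y = y'

/-- ultimately periodic infinite word -/
def UltPer (y : ℕ → B) : Prop := ∃ m L : ℕ, 0 < L ∧ ∀ i, m ≤ i → y (i + L) = y i

noncomputable def beta [Inhabited B] (q : T.Q) : ℕ → B := by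
  classical
  exact if h : ∃ y, TailOut T q y then h.choose else default

noncomputable def BSet [Inhabited B] : Set T.Q := {q | Blind T q ∧ UltPer (beta T q)}

lemma tail_exists (hTr : T.Trim) (hCl : T.Clean) [Inhabited B] (q : T.Q) :
    ∃ y, TailOut T q y := by
  obtain ⟨x, ρ, hacc, i, hi⟩ := hTr q
  have hinf : T.InfiniteOutput x ρ := hCl x ρ hacc
  set z : ℕ → A := fun j => x (i + j) with hz
  set σ : ℕ → T.Q := fun j => ρ (i + j) with hσ
  have hσrun : T.IsRun z σ := by
    intro j
    show T.trans (ρ (i + j)) (x (i + j)) (ρ (i + (j+1)))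
    rw [show i + (j+1) = (i + j) + 1 by omega]
    exact hacc.1 (i + j)
  have hσfin : T.Final σ := by
    intro j
    obtain ⟨k, hk1, hk2⟩ := hacc.2.2 (i + j)
    exact ⟨k - i, by omega, by show ρ (i + (k - i)) ∈ T.F; rw [show i + (k-i) = k by omega]; exact hk2⟩
  have hσinf : T.InfiniteOutput z σ := by
    intro m
    obtain ⟨n, hn⟩ := hinf (m + (T.outPrefix x ρ i).length)
    refine ⟨n, ?_⟩
    have h1 : T.outPrefix x ρ (i + n) = T.outPrefix x ρ i ++ T.outPrefix z σ n :=
      outPrefix_shift T x ρ i n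
    have h2 : (T.outPrefix x ρ n).length ≤ (T.outPrefix x ρ (i + n)).length :=
      (outPrefix_prefix T x ρ (by omega)).length_le
    rw [h1] at h2
    simp at h2
    omega
  obtain ⟨y, hy⟩ := exists_outWord T hσinf
  exact ⟨y, z, σ, by show ρ (i+0) = q; rw [Nat.add_zero]; exact hi, hσrun, hσfin, hσinf, hy⟩

lemma beta_tailOut (hTr : T.Trim) (hCl : T.Clean) [Inhabited B] (q : T.Q) :
    TailOut T q (beta T q) := by
  have h := tail_exists T hTr hCl q
  rw [beta]
  simp only [h, dif_pos]
  exact h.choose_spec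

lemma blind_tail_eq (hTr : T.Trim) (hCl : T.Clean) [Inhabited B] {q : T.Q} (hb : Blind T q)
    {y : ℕ → B} (h : TailOut T q y) : y = beta T q :=
  hb y _ h (beta_tailOut T hTr hCl q)

lemma prefixOf_append_of_prefixOf {v w : List B} {y : ℕ → B} (h : PrefixOf w y) :
    PrefixOf (v ++ w) (listPrepend v y) := by
  rw [prefixOf_def] at h ⊢
  intro i hi
  rcases Nat.lt_or_ge i v.length with h1 | h1
  · rw [List.getElem_append_left h1, listPrepend_lt _ _ _ h1]
  · have h2 : i - v.length < w.length := by simp at hi; omega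
    rw [List.getElem_append_right h1, listPrepend_ge _ _ _ h1]
    exact h _ h2

lemma listPrepend_inj {v : List B} {y y' : ℕ → B}
    (h : listPrepend v y = listPrepend v y') : y = y' := by
  funext i
  have := congrFun h (v.length + i)
  rwa [listPrepend_add, listPrepend_add] at this

lemma tail_prepend {q q' : T.Q} {a : A} (ht : T.trans q a q') {y : ℕ → B}
    (h : TailOut T q' y) : TailOut T q (listPrepend (T.out q a q') y) := by
  obtain ⟨z, σ, hσ0, hσrun, hσfin, hσinf, hσout⟩ := h
  set z' : ℕ → A := fun i => match i with | 0 => a | (j+1) => z j with hz'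
  set σ' : ℕ → T.Q := fun i => match i with | 0 => q | (j+1) => σ j with hσ'
  have hshift : ∀ m, T.outPrefix z' σ' (1 + m) = T.out q a q' ++ T.outPrefix z σ m := by
    intro m
    rw [outPrefix_shift]
    have e1 : T.outPrefix z' σ' 1 = T.out q a q' := by
      rw [show (1:ℕ) = 0 + 1 from rfl, outPrefix_succ]
      show [] ++ T.out (σ' 0) (z' 0) (σ' 1) = _
      simp [hσ', hz', hσ0]
    rw [e1]
    congr 1
    apply outPrefix_congr
    · intro i _
      show σ' (1 + i) = σ i
      rw [show 1 + i = i + 1 by omega]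
    · intro i _
      show z' (1 + i) = z i
      rw [show 1 + i = i + 1 by omega]
  refine ⟨z', σ', rfl, ?_, ?_, ?_, ?_⟩
  · intro i
    match i with
    | 0 =>
        show T.trans q (z' 0) (σ' 1)
        show T.trans q a (σ 0)
        rw [hσ0]; exact ht
    | (j+1) =>
        show T.trans (σ j) (z j) (σ (j+1))
        exact hσrun j
  · intro i
    obtain ⟨k, hk1, hk2⟩ := hσfin i
    exact ⟨k + 1, by omega, hk2⟩
  · intro m
    obtain ⟨n, hn⟩ := hσinf m
    refine ⟨1 + n, ?_⟩
    rw [hshift]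
    simp
    omega
  · intro n
    have h1 : T.outPrefix z' σ' n <+: T.outPrefix z' σ' (1 + n) :=
      outPrefix_prefix T z' σ' (by omega)
    apply prefixOf_of_prefix h1
    rw [hshift]
    rw [outEq_firstN T hσout n]
    exact prefixOf_append_of_prefixOf (prefixOf_firstN y _)

lemma blind_succ (hTr : T.Trim) (hCl : T.Clean) [Inhabited B] {q q' : T.Q} {a : A}
    (hb : Blind T q) (ht : T.trans q a q') :
    Blind T q' ∧ beta T q = listPrepend (T.out q a q') (beta T q') := by
  have hblind' : Blind T q' := by
    intro y y' hy hy'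
    have e1 := hb _ _ (tail_prepend T ht hy) (tail_prepend T ht hy')
    exact listPrepend_inj e1
  refine ⟨hblind', ?_⟩
  exact (blind_tail_eq T hTr hCl hb (tail_prepend T ht (beta_tailOut T hTr hCl q'))).symm

lemma bset_closed (hTr : T.Trim) (hCl : T.Clean) [Inhabited B] {q q' : T.Q} {a : A}
    (hq : q ∈ BSet T) (ht : T.trans q a q') : q' ∈ BSet T := by
  obtain ⟨hblind', hbeta⟩ := blind_succ T hTr hCl hq.1 ht
  refine ⟨hblind', ?_⟩
  obtain ⟨m, L, hL, hper⟩ := hq.2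
  refine ⟨m, L, hL, fun i hi => ?_⟩
  have e1 : ∀ j, beta T q' j = beta T q ((T.out q a q').length + j) := by
    intro j
    rw [hbeta, listPrepend_add]
  rw [e1, e1, ← Nat.add_assoc]
  exact hper _ (by omega)

/-- the future output of a run at a blind state is `beta` -/
lemma run_beta (hTr : T.Trim) (hCl : T.Clean) [Inhabited B] {x : ℕ → A} {ρ : ℕ → T.Q}
    {y : ℕ → B} (hrun : T.IsRun x ρ) (hfin : T.Final ρ) (hinf : T.InfiniteOutput x ρ)
    (hout : T.OutEq x ρ y) (n : ℕ) (hb : Blind T (ρ n)) :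
    ∀ i, y ((T.outPrefix x ρ n).length + i) = beta T (ρ n) i := by
  set z : ℕ → A := fun j => x (n + j) with hz
  set σ : ℕ → T.Q := fun j => ρ (n + j) with hσ
  set w : ℕ → B := fun i => y ((T.outPrefix x ρ n).length + i) with hw
  have hσrun : T.IsRun z σ := by
    intro j
    show T.trans (ρ (n + j)) (x (n + j)) (ρ (n + (j+1)))
    rw [show n + (j+1) = (n + j) + 1 by omega]
    exact hrun (n + j)
  have hσfin : T.Final σ := by
    intro j
    obtain ⟨k, hk1, hk2⟩ := hfin (n + j)
    exact ⟨k - n, by omega, by show ρ (n + (k - n)) ∈ T.F; rw [show n + (k-n) = k by omega]; exact hk2⟩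
  have hkey : ∀ m, T.outPrefix z σ m = firstN w (T.outPrefix z σ m).length := by
    intro m
    have h1 : T.outPrefix x ρ (n + m) = T.outPrefix x ρ n ++ T.outPrefix z σ m :=
      outPrefix_shift T x ρ n m
    have h2 := outEq_firstN T hout (n + m)
    have h3 := outEq_firstN T hout n
    rw [h1] at h2
    rw [List.length_append, firstN_add] at h2
    have h4 : T.outPrefix z σ m = firstN (fun i => y ((T.outPrefix x ρ n).length + i)) (T.outPrefix z σ m).length :=
      List.append_inj_right (h2.trans (congrArg (· ++ _) h3.symm)) rfl
    exact h4
  have hσinf : T.InfiniteOutput z σ := by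
    intro m
    obtain ⟨k, hk⟩ := hinf (m + (T.outPrefix x ρ n).length)
    refine ⟨k, ?_⟩
    have h2 : (T.outPrefix x ρ k).length ≤ (T.outPrefix x ρ (n + k)).length :=
      (outPrefix_prefix T x ρ (by omega)).length_le
    have h1 : T.outPrefix x ρ (n + k) = T.outPrefix x ρ n ++ T.outPrefix z σ k :=
      outPrefix_shift T x ρ n k
    rw [h1] at h2
    simp at h2
    omega
  have htail : TailOut T (ρ n) w := by
    refine ⟨z, σ, by simp [hσ], hσrun, hσfin, hσinf, ?_⟩
    intro m
    rw [prefixOf_iff_firstN]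
    exact hkey m
  intro i
  have := blind_tail_eq T hTr hCl hb htail
  exact congrFun this.symm i ▸ (congrFun this i)

end Aux
namespace Aux
variable {A B : Type} (T : NT A B)

lemma pump_accept [Inhabited A] [Inhabited B] (hCl : T.Clean) {q q' : T.Q}
    {u v : List A} {α β : List B}
    (hv : v ≠ []) (hI : q ∈ T.I) (hF : q' ∈ T.F)
    (h1 : T.FinRun q u α q') (h2 : T.FinRun q' v β q') :
    ∃ ρ, T.Accepting (listPrepend u (perWord v default)) ρ ∧
      T.InfiniteOutput (listPrepend u (perWord v default)) ρ ∧
      T.OutEq (listPrepend u (perWord v default)) ρ (upWord α β default) ∧ β ≠ [] := by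
  have hL : 0 < v.length := List.length_pos_iff.2 hv
  obtain ⟨ρ, hρ0, hρrun, hρst, hρout⟩ := run_pump T hv h1 h2
  set x := listPrepend u (perWord v default) with hx
  have hacc : T.Accepting x ρ := by
    refine ⟨hρrun, by rw [hρ0]; exact hI, ?_⟩
    intro i
    refine ⟨u.length + i * v.length, by nlinarith, ?_⟩
    rw [hρst i]
    exact hF
  have hinf : T.InfiniteOutput x ρ := hCl x ρ hacc
  have hβ : β ≠ [] := by
    intro hβ
    obtain ⟨n, hn⟩ := hinf (α.length + 1)
    have h3 : (T.outPrefix x ρ n).length ≤ α.length := by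
      have h4 : T.outPrefix x ρ n <+: T.outPrefix x ρ (u.length + n * v.length) :=
        outPrefix_prefix T x ρ (by nlinarith)
      have h5 := h4.length_le
      rw [hρout n, hβ, powList_nil, List.append_nil] at h5
      exact h5
    omega
  refine ⟨ρ, hacc, hinf, ?_, hβ⟩
  intro n
  have h4 : T.outPrefix x ρ n <+: T.outPrefix x ρ (u.length + n * v.length) :=
    outPrefix_prefix T x ρ (by nlinarith)
  apply prefixOf_of_prefix h4
  rw [hρout n]
  exact prefixOf_append_pow α β default n

lemma x_agree [Inhabited A] (u v : List A) (z : ℕ → A) (n i : ℕ)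
    (hi : i < u.length + n * v.length) :
    listPrepend u (perWord v default) i = listPrepend (u ++ powList v n) z i := by
  have hi2 : i < (u ++ powList v n).length := by simp; omega
  rw [listPrepend_lt _ _ _ hi2]
  rcases Nat.lt_or_ge i u.length with h1 | h1
  · rw [listPrepend_lt _ _ _ h1, List.getElem_append_left h1]
  · have h2 : i - u.length < (powList v n).length := by simp; omega
    rw [listPrepend_ge _ _ _ h1, List.getElem_append_right h1, powList_getElem _ _ _ h2]
    show v.getD ((i - u.length) % v.length) default = _
    rw [getD_eq_getElem]

/-- the continuity argument: an ε-loop parallel to an accepting loop forces membership in BSet -/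
lemma danger [Inhabited A] [Inhabited B] {f : (ℕ → A) → Option (ℕ → B)}
    (hCl : T.Clean) (hTr : T.Trim) (hT : T.Computes f) (hcont : ContinuousPartial f)
    {q₁ q₂ q₁' q₂' : T.Q} {u u' : List A} {α₁ α₁' α₂ : List B}
    (h1I : q₁ ∈ T.I) (h2I : q₂ ∈ T.I) (h1F : q₁' ∈ T.F) (hu' : u' ≠ [])
    (hr1 : T.FinRun q₁ u α₁ q₁') (hl1 : T.FinRun q₁' u' α₁' q₁')
    (hr2 : T.FinRun q₂ u α₂ q₂') (hl2 : T.FinRun q₂' u' [] q₂') :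
    q₂' ∈ BSet T := by
  have hL : 0 < u'.length := List.length_pos_iff.2 hu'
  obtain ⟨ρ, hacc, hinf, houteq, hα₁'⟩ := pump_accept T hCl hu' h1I h1F hr1 hl1
  set x := listPrepend u (perWord u' default) with hx
  set Y₁ := upWord α₁ α₁' default with hY₁
  have hfx : f x = some Y₁ := (hT x Y₁).2 ⟨ρ, hacc, hinf, houteq⟩
  have hLB : 0 < α₁'.length := List.length_pos_iff.2 hα₁'
  -- every tail output from q₂' equals the tail of Y₁ after α₂
  have htail : ∀ y : ℕ → B, TailOut T q₂' y → y = fun i => Y₁ (α₂.length + i) := by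
    intro y hy
    obtain ⟨z, σ, hσ0, hσrun, hσfin, hσinf, hσout⟩ := hy
    have key : ∀ m : ℕ, ∀ i < m, Y₁ i = listPrepend α₂ y i := by
      intro m
      obtain ⟨p, hp⟩ := hcont x Y₁ hfx m
      -- the combined run on x_p
      have hfr : T.FinRun q₂ (u ++ powList u' p) α₂ q₂' := by
        have h5 := finRun_append T hr2 (finRun_pow T hl2 p)
        rwa [powList_nil, List.append_nil] at h5
      obtain ⟨ρ₂, hρ₂0, hρ₂run, hρ₂st, hρ₂out⟩ := run_prepend T hfr z σ hσ0 hσrun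
      set xp := listPrepend (u ++ powList u' p) z with hxp
      have hacc₂ : T.Accepting xp ρ₂ := by
        refine ⟨hρ₂run, by rw [hρ₂0]; exact h2I, ?_⟩
        intro i
        obtain ⟨k, hk1, hk2⟩ := hσfin i
        exact ⟨(u ++ powList u' p).length + k, by omega, by rw [hρ₂st]; exact hk2⟩
      have hinf₂ : T.InfiniteOutput xp ρ₂ := by
        intro m'
        obtain ⟨k, hk⟩ := hσinf m'
        refine ⟨(u ++ powList u' p).length + k, ?_⟩
        rw [hρ₂out]
        simp
        omega
      have hout₂ : T.OutEq xp ρ₂ (listPrepend α₂ y) := by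
        intro n
        have h4 : T.outPrefix xp ρ₂ n <+:
            T.outPrefix xp ρ₂ ((u ++ powList u' p).length + n) :=
          outPrefix_prefix T xp ρ₂ (by omega)
        apply prefixOf_of_prefix h4
        rw [hρ₂out]
        rw [outEq_firstN T hσout n]
        exact prefixOf_append_of_prefixOf (prefixOf_firstN y _)
      have hfxp : f xp = some (listPrepend α₂ y) := (hT xp _).2 ⟨ρ₂, hacc₂, hinf₂, hout₂⟩
      refine hp xp _ hfxp ?_
      intro i hip
      have hilt : i < u.length + p * u'.length := by nlinarith
      exact x_agree u u' z p i hilt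
    funext i
    have h6 := key (α₂.length + i + 1) (α₂.length + i) (by omega)
    rw [listPrepend_add] at h6
    exact h6.symm
  have hbl : Blind T q₂' := by
    intro y y' hy hy'
    rw [htail y hy, htail y' hy']
  refine ⟨hbl, ?_⟩
  have hbeq : beta T q₂' = fun i => Y₁ (α₂.length + i) :=
    htail _ (beta_tailOut T hTr hCl q₂')
  rw [hbeq]
  refine ⟨α₁.length, α₁'.length, hLB, fun i hi => ?_⟩
  show Y₁ (α₂.length + (i + α₁'.length)) = Y₁ (α₂.length + i)
  rw [show α₂.length + (i + α₁'.length) = (α₂.length + i) + α₁'.length by omega]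
  exact upWord_period α₁ α₁' default _ (by omega)

end Aux
namespace Aux
variable {A B : Type} (T : NT A B)

lemma perChoice [Inhabited B] (q : T.Q) : ∃ m L : ℕ, 0 < L ∧
    (UltPer (beta T q) → ∀ i, m ≤ i → beta T q (i + L) = beta T q i) := by
  classical
  by_cases h : UltPer (beta T q)
  · obtain ⟨m, L, hL, hp⟩ := h
    exact ⟨m, L, hL, fun _ => hp⟩
  · exact ⟨0, 1, one_pos, fun h' => absurd h' h⟩

noncomputable def mper [Inhabited B] (q : T.Q) : ℕ := (perChoice T q).choose

noncomputable def Lper [Inhabited B] (q : T.Q) : ℕ := (perChoice T q).choose_spec.choose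

lemma Lper_pos [Inhabited B] (q : T.Q) : 0 < Lper T q :=
  (perChoice T q).choose_spec.choose_spec.1

lemma per_spec [Inhabited B] {q : T.Q} (h : UltPer (beta T q)) :
    ∀ i, mper T q ≤ i → beta T q (i + Lper T q) = beta T q i :=
  (perChoice T q).choose_spec.choose_spec.2 h

lemma per_iter [Inhabited B] {q : T.Q} (h : UltPer (beta T q)) (c : ℕ) :
    ∀ j, mper T q ≤ j → beta T q (j + c * Lper T q) = beta T q j := by
  induction c with
  | zero => simp
  | succ c ih =>
      intro j hj
      rw [add_one_mul, ← Nat.add_assoc, per_spec T h _ (by omega)]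
      exact ih j hj

noncomputable def bnd [Inhabited B] (q : T.Q) : ℕ := mper T q + Lper T q

noncomputable def reduce [Inhabited B] (q : T.Q) (k : ℕ) : ℕ :=
  if k < bnd T q then k else mper T q + (k - mper T q) % Lper T q

lemma reduce_le [Inhabited B] (q : T.Q) (k : ℕ) : reduce T q k ≤ k := by
  rw [reduce]
  split
  · omega
  · next h =>
      have h2 : (k - mper T q) % Lper T q ≤ k - mper T q := Nat.mod_le _ _
      rw [bnd] at h
      omega

lemma reduce_lt [Inhabited B] (q : T.Q) (k : ℕ) : reduce T q k < bnd T q := by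
  rw [reduce]
  split
  · next h => exact h
  · next h =>
      have h2 : (k - mper T q) % Lper T q < Lper T q := Nat.mod_lt _ (Lper_pos T q)
      rw [bnd]
      omega

lemma reduce_beta [Inhabited B] {q : T.Q} (h : UltPer (beta T q)) (k : ℕ) :
    ∀ i, beta T q (reduce T q k + i) = beta T q (k + i) := by
  intro i
  rw [reduce]
  split
  · rfl
  · next h2 =>
      rw [bnd] at h2
      have hm : mper T q ≤ k := by omega
      set c := (k - mper T q) / Lper T q with hc
      set r := (k - mper T q) % Lper T q with hr
      have hdm : Lper T q * c + r = k - mper T q := Nat.div_add_mod _ _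
      have hk : k + i = (mper T q + r + i) + c * Lper T q := by
        have := Nat.mul_comm (Lper T q) c
        omega
      rw [hk, per_iter T h c _ (by omega)]

noncomputable def bigN [Inhabited B] : ℕ := Finset.univ.sup (fun q : T.Q => bnd T q)

lemma bnd_le_bigN [Inhabited B] (q : T.Q) : bnd T q ≤ bigN T :=
  Finset.le_sup (Finset.mem_univ q)

noncomputable def lenOut (q : T.Q) (k : ℕ) (a : A) (q' : T.Q) : ℕ :=
  max ((T.out q a q').length - k) 1

noncomputable def nextk [Inhabited B] (q : T.Q) (k : ℕ) (a : A) (q' : T.Q) : ℕ := by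
  classical
  exact if q ∈ BSet T then reduce T q' (k + lenOut T q k a q' - (T.out q a q').length) else 0

noncomputable def outF [Inhabited B] (q : T.Q) (k : ℕ) (a : A) (q' : T.Q) : List B := by
  classical
  exact if q ∈ BSet T then firstN (fun i => beta T q (k + i)) (lenOut T q k a q')
    else T.out q a q'

lemma nextk_lt [Inhabited B] (q : T.Q) (k : ℕ) (a : A) (q' : T.Q) :
    nextk T q k a q' < bigN T + 1 := by
  classical
  rw [nextk]
  split
  · have h1 := reduce_lt T q' (k + lenOut T q k a q' - (T.out q a q').length)
    have h2 := bnd_le_bigN T q'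
    omega
  · have h2 := bnd_le_bigN T q'
    rw [bnd] at h2
    have := Lper_pos T q'
    omega

/-- the full product transducer -/
noncomputable def TF [Inhabited A] [Inhabited B] : NT A B where
  Q := T.Q × Fin (bigN T + 1)
  fin := by infer_instance
  I := {s | s.1 ∈ T.I ∧ s.2.val = 0}
  F := {s | s.1 ∈ T.F}
  trans := fun s a s' => T.trans s.1 a s'.1 ∧ s'.2.val = nextk T s.1 s.2.val a s'.1
  out := fun s a s' => outF T s.1 s.2.val a s'.1

end Aux
namespace Aux
variable {A B : Type} (T : NT A B) [Inhabited A] [Inhabited B]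

lemma TF_trans {s s' : (TF T).Q} {a : A} :
    (TF T).trans s a s' ↔ (T.trans s.1 a s'.1 ∧ s'.2.val = nextk T s.1 s.2.val a s'.1) :=
  Iff.rfl

lemma TF_out (s s' : (TF T).Q) (a : A) :
    (TF T).out s a s' = outF T s.1 s.2.val a s'.1 := rfl

lemma TF_I {s : (TF T).Q} : s ∈ (TF T).I ↔ (s.1 ∈ T.I ∧ s.2.val = 0) := Iff.rfl

lemma TF_F {s : (TF T).Q} : s ∈ (TF T).F ↔ s.1 ∈ T.F := Iff.rfl

noncomputable def kfun (x : ℕ → A) (ρ : ℕ → T.Q) : ℕ → ℕ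
  | 0 => 0
  | (n+1) => nextk T (ρ n) (kfun x ρ n) (x n) (ρ (n+1))

lemma kfun_lt (x : ℕ → A) (ρ : ℕ → T.Q) (n : ℕ) : kfun T x ρ n < bigN T + 1 := by
  cases n with
  | zero => simp [kfun]
  | succ n => exact nextk_lt T _ _ _ _

noncomputable def lift (x : ℕ → A) (ρ : ℕ → T.Q) : ℕ → (TF T).Q :=
  fun n => (ρ n, ⟨kfun T x ρ n, kfun_lt T x ρ n⟩)

lemma lift_isRun {x : ℕ → A} {ρ : ℕ → T.Q} (h : T.IsRun x ρ) :
    (TF T).IsRun x (lift T x ρ) :=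
  fun i => ⟨h i, rfl⟩

lemma lift_accepting {x : ℕ → A} {ρ : ℕ → T.Q} (h : T.Accepting x ρ) :
    (TF T).Accepting x (lift T x ρ) := by
  refine ⟨lift_isRun T h.1, ⟨h.2.1, rfl⟩, ?_⟩
  intro i
  obtain ⟨j, hj1, hj2⟩ := h.2.2 i
  exact ⟨j, hj1, hj2⟩

lemma run_eq_lift {x : ℕ → A} {ρ' : ℕ → (TF T).Q} (hrun : (TF T).IsRun x ρ')
    (h0 : ρ' 0 ∈ (TF T).I) : ρ' = lift T x (fun n => (ρ' n).1) := by
  funext n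
  induction n with
  | zero =>
      show ρ' 0 = ((ρ' 0).1, ⟨kfun T x _ 0, _⟩)
      refine Prod.ext rfl (Fin.ext ?_)
      exact (TF_I T).1 h0 |>.2
  | succ n ih =>
      refine Prod.ext rfl (Fin.ext ?_)
      have h1 := ((TF_trans T).1 (hrun n)).2
      show (ρ' (n+1)).2.val = kfun T x (fun n => (ρ' n).1) (n+1)
      rw [h1]
      show nextk T (ρ' n).1 (ρ' n).2.val (x n) (ρ' (n+1)).1 = nextk T (ρ' n).1 (kfun T x (fun n => (ρ' n).1) n) (x n) (ρ' (n+1)).1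
      have h2 : (ρ' n).2.val = kfun T x (fun n => (ρ' n).1) n := by
        rw [ih]
        rfl
      rw [h2]

lemma kfun_nonB (hTr : T.Trim) (hCl : T.Clean) {x : ℕ → A} {ρ : ℕ → T.Q}
    (hrun : T.IsRun x ρ) {n : ℕ} (h : ρ n ∉ BSet T) : kfun T x ρ n = 0 := by
  cases n with
  | zero => rfl
  | succ n =>
      show nextk T (ρ n) (kfun T x ρ n) (x n) (ρ (n+1)) = 0
      rw [nextk]
      classical
      exact if_neg (fun hB => h (bset_closed T hTr hCl hB (hrun n)))

lemma firstN_congr {f g : ℕ → B} (n : ℕ) (h : ∀ i < n, f i = g i) :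
    firstN f n = firstN g n := by
  apply List.ext_getElem (by simp)
  intro i h1 h2
  rw [firstN_getElem, firstN_getElem]
  exact h i (by simpa using h1)

/-- the central output invariant for the lifted run -/
lemma lift_invariant (hTr : T.Trim) (hCl : T.Clean) {x : ℕ → A} {ρ : ℕ → T.Q} {y : ℕ → B}
    (hrun : T.IsRun x ρ) (hfin : T.Final ρ) (hinf : T.InfiniteOutput x ρ)
    (hout : T.OutEq x ρ y) (n : ℕ) :
    ((TF T).outPrefix x (lift T x ρ) n
        = firstN y (((TF T).outPrefix x (lift T x ρ) n).length))
    ∧ (T.outPrefix x ρ n).length + kfun T x ρ n ≤ ((TF T).outPrefix x (lift T x ρ) n).length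
    ∧ (ρ n ∈ BSet T → ∀ i, y (((TF T).outPrefix x (lift T x ρ) n).length + i)
          = beta T (ρ n) (kfun T x ρ n + i))
    ∧ (ρ n ∉ BSet T → ((TF T).outPrefix x (lift T x ρ) n).length
          = (T.outPrefix x ρ n).length) := by
  classical
  induction n with
  | zero =>
      refine ⟨by simp [firstN], by simp [kfun], ?_, by simp⟩
      intro hB i
      show y (((TF T).outPrefix x (lift T x ρ) 0).length + i) = beta T (ρ 0) (kfun T x ρ 0 + i)
      have h1 := run_beta T hTr hCl hrun hfin hinf hout 0 hB.1
      simp only [outPrefix_zero, List.length_nil, Nat.zero_add] at h1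
      show y (((TF T).outPrefix x (lift T x ρ) 0).length + i) = beta T (ρ 0) (0 + i)
      have h2 : (TF T).outPrefix x (lift T x ρ) 0 = [] := outPrefix_zero _ _ _
      rw [h2]
      simp only [List.length_nil, Nat.zero_add]
      exact h1 i
  | succ n ih =>
      obtain ⟨ih1, ih2, ih3, ih4⟩ := ih
      set ℓ := (T.out (ρ n) (x n) (ρ (n+1))).length with hℓ
      set kn := kfun T x ρ n with hkn
      have hsucc' : (TF T).outPrefix x (lift T x ρ) (n+1)
          = (TF T).outPrefix x (lift T x ρ) n ++ outF T (ρ n) kn (x n) (ρ (n+1)) := by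
        rw [outPrefix_succ]
        rfl
      have hsuccT : T.outPrefix x ρ (n+1) = T.outPrefix x ρ n ++ T.out (ρ n) (x n) (ρ (n+1)) :=
        outPrefix_succ T x ρ n
      have hknext : kfun T x ρ (n+1) = nextk T (ρ n) kn (x n) (ρ (n+1)) := rfl
      have hlenT : (T.outPrefix x ρ (n+1)).length = (T.outPrefix x ρ n).length + ℓ := by
        rw [hsuccT, List.length_append]
      by_cases hq : ρ n ∈ BSet T
      · -- blind case
        have hq' : ρ (n+1) ∈ BSet T := bset_closed T hTr hCl hq (hrun n)
        set ℓ' := lenOut T (ρ n) kn (x n) (ρ (n+1)) with hℓ'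
        have hℓ'def : ℓ' = max (ℓ - kn) 1 := rfl
        have houtF : outF T (ρ n) kn (x n) (ρ (n+1))
            = firstN (fun i => beta T (ρ n) (kn + i)) ℓ' := by
          rw [outF, if_pos hq]
        have hbshift : ∀ j, beta T (ρ n) (ℓ + j) = beta T (ρ (n+1)) j := by
          intro j
          have h5 := (blind_succ T hTr hCl hq.1 (hrun n)).2
          rw [h5, listPrepend_add]
        have hk1 : kfun T x ρ (n+1) = reduce T (ρ (n+1)) (kn + ℓ' - ℓ) := by
          rw [hknext, nextk]
          exact if_pos hq
        have houtF2 : outF T (ρ n) kn (x n) (ρ (n+1))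
            = firstN (fun i => y (((TF T).outPrefix x (lift T x ρ) n).length + i)) ℓ' := by
          rw [houtF]
          apply firstN_congr
          intro i _
          exact (ih3 hq i).symm
        have hA : (TF T).outPrefix x (lift T x ρ) (n+1)
            = firstN y (((TF T).outPrefix x (lift T x ρ) n).length + ℓ') := by
          rw [hsucc', houtF2, firstN_add, ← ih1]
        have hlen : ((TF T).outPrefix x (lift T x ρ) (n+1)).length
            = ((TF T).outPrefix x (lift T x ρ) n).length + ℓ' := by
          rw [hA, firstN_length]
        have h7 : ℓ ≤ kn + ℓ' := by rw [hℓ'def]; omega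
        refine ⟨by rw [hlen]; exact hA, ?_, ?_, fun hc => absurd hq' hc⟩
        · rw [hlen, hlenT, hk1]
          have h6 := reduce_le T (ρ (n+1)) (kn + ℓ' - ℓ)
          omega
        · intro _ i
          rw [hlen, hk1]
          have e1 : ((TF T).outPrefix x (lift T x ρ) n).length + ℓ' + i
              = ((TF T).outPrefix x (lift T x ρ) n).length + (ℓ' + i) := by omega
          rw [e1, ih3 hq (ℓ' + i)]
          have e2 : kn + (ℓ' + i) = ℓ + ((kn + ℓ' - ℓ) + i) := by omega
          rw [e2, hbshift]
          rw [reduce_beta T hq'.2 (kn + ℓ' - ℓ) i]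
      · -- non-blind case
        have hkn0 : kn = 0 := kfun_nonB T hTr hCl hrun hq
        have houtF : outF T (ρ n) kn (x n) (ρ (n+1)) = T.out (ρ n) (x n) (ρ (n+1)) := by
          rw [outF]
          exact if_neg hq
        have hlen'n : ((TF T).outPrefix x (lift T x ρ) n).length
            = (T.outPrefix x ρ n).length := ih4 hq
        have hk0 : kfun T x ρ (n+1) = 0 := by
          rw [hknext, nextk]
          exact if_neg hq
        -- out = the corresponding segment of y
        have hseg : T.out (ρ n) (x n) (ρ (n+1))
            = firstN (fun i => y ((T.outPrefix x ρ n).length + i)) ℓ := by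
          have e3 := outEq_firstN T hout (n+1)
          rw [hlenT, hsuccT, firstN_add] at e3
          have e4 := outEq_firstN T hout n
          rw [← e4] at e3
          exact List.append_cancel_left e3
        have hA : (TF T).outPrefix x (lift T x ρ) (n+1)
            = firstN y ((T.outPrefix x ρ n).length + ℓ) := by
          rw [hsucc', houtF, hseg, firstN_add, ih1, hlen'n]
        have hlen : ((TF T).outPrefix x (lift T x ρ) (n+1)).length
            = (T.outPrefix x ρ (n+1)).length := by
          rw [hA, firstN_length, hlenT]
        refine ⟨?_, by rw [hlen, hk0]; omega, ?_, fun _ => hlen⟩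
        · rw [hlen, hlenT]
          exact hA
        · intro hB i
          have h1 := run_beta T hTr hCl hrun hfin hinf hout (n+1) hB.1
          rw [hlen, hk0, Nat.zero_add]
          exact h1 i

end Aux
namespace Aux
variable {A B : Type} (T : NT A B) [Inhabited A] [Inhabited B]

lemma proj_isRun {x : ℕ → A} {ρ' : ℕ → (TF T).Q} (h : (TF T).IsRun x ρ') :
    T.IsRun x (fun n => (ρ' n).1) :=
  fun i => ((TF_trans T).1 (h i)).1

lemma proj_accepting {x : ℕ → A} {ρ' : ℕ → (TF T).Q} (h : (TF T).Accepting x ρ') :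
    T.Accepting x (fun n => (ρ' n).1) := by
  refine ⟨proj_isRun T h.1, ((TF_I T).1 h.2.1).1, ?_⟩
  intro i
  obtain ⟨j, hj1, hj2⟩ := h.2.2 i
  exact ⟨j, hj1, (TF_F T).1 hj2⟩

lemma lift_outEq (hTr : T.Trim) (hCl : T.Clean) {x : ℕ → A} {ρ : ℕ → T.Q} {y : ℕ → B}
    (hrun : T.IsRun x ρ) (hfin : T.Final ρ) (hinf : T.InfiniteOutput x ρ)
    (hout : T.OutEq x ρ y) : (TF T).OutEq x (lift T x ρ) y := by
  intro n
  rw [prefixOf_iff_firstN]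
  exact (lift_invariant T hTr hCl hrun hfin hinf hout n).1

lemma lift_inf (hTr : T.Trim) (hCl : T.Clean) {x : ℕ → A} {ρ : ℕ → T.Q} {y : ℕ → B}
    (hrun : T.IsRun x ρ) (hfin : T.Final ρ) (hinf : T.InfiniteOutput x ρ)
    (hout : T.OutEq x ρ y) : (TF T).InfiniteOutput x (lift T x ρ) := by
  intro m
  obtain ⟨n, hn⟩ := hinf m
  refine ⟨n, ?_⟩
  have h2 := (lift_invariant T hTr hCl hrun hfin hinf hout n).2.1
  omega

lemma TF_unambiguous (hU : T.Unambiguous) : (TF T).Unambiguous := by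
  intro x ρ'₁ ρ'₂ h1 h2
  have e1 := hU x _ _ (proj_accepting T h1) (proj_accepting T h2)
  rw [run_eq_lift T h1.1 h1.2.1, run_eq_lift T h2.1 h2.2.1, e1]

lemma TF_clean (hTr : T.Trim) (hCl : T.Clean) : (TF T).Clean := by
  intro x ρ' hacc'
  have haccT : T.Accepting x (fun n => (ρ' n).1) := proj_accepting T hacc'
  have hinfT : T.InfiniteOutput x (fun n => (ρ' n).1) := hCl x _ haccT
  obtain ⟨y, hy⟩ := exists_outWord T hinfT
  have he : ρ' = lift T x (fun n => (ρ' n).1) := run_eq_lift T hacc'.1 hacc'.2.1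
  rw [he]
  exact lift_inf T hTr hCl haccT.1 haccT.2.2 hinfT hy

lemma TF_computes {f : (ℕ → A) → Option (ℕ → B)} (hTr : T.Trim) (hCl : T.Clean)
    (hT : T.Computes f) : (TF T).Computes f := by
  intro x y
  constructor
  · intro hf
    obtain ⟨ρ, hacc, hinf, hout⟩ := (hT x y).1 hf
    exact ⟨lift T x ρ, lift_accepting T hacc,
      lift_inf T hTr hCl hacc.1 hacc.2.2 hinf hout,
      lift_outEq T hTr hCl hacc.1 hacc.2.2 hinf hout⟩
  · rintro ⟨ρ', hacc', hinf', hout'⟩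
    set ρ := fun n => (ρ' n).1 with hρ
    have haccT : T.Accepting x ρ := proj_accepting T hacc'
    have hinfT : T.InfiniteOutput x ρ := hCl x _ haccT
    obtain ⟨y₀, hy₀⟩ := exists_outWord T hinfT
    have he : ρ' = lift T x ρ := run_eq_lift T hacc'.1 hacc'.2.1
    have hfy₀ : f x = some y₀ := (hT x y₀).2 ⟨ρ, haccT, hinfT, hy₀⟩
    have hyy : y = y₀ := by
      apply eq_of_prefix_agree
      intro m
      obtain ⟨n, hn⟩ := hinf' m
      refine ⟨((TF T).outPrefix x ρ' n).length, hn, ?_⟩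
      have e1 := outEq_firstN (TF T) hout' n
      have e2 := (lift_invariant T hTr hCl haccT.1 haccT.2.2 hinfT hy₀ n).1
      rw [← he] at e2
      rw [← e1, ← e2]
    rw [hyy]
    exact hfy₀

lemma outF_ne_nil {q q' : T.Q} {a : A} {k : ℕ} (hq : q ∈ BSet T) :
    outF T q k a q' ≠ [] := by
  rw [outF, if_pos hq]
  have h1 : (firstN (fun i => beta T q (k + i)) (lenOut T q k a q')).length = lenOut T q k a q' :=
    firstN_length _ _
  intro hc
  rw [hc] at h1
  simp at h1
  rw [lenOut] at h1
  omega

lemma TF_finRun_proj {s s' : (TF T).Q} {u : List A} {α : List B}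
    (h : (TF T).FinRun s u α s') :
    ∃ αT, T.FinRun s.1 u αT s'.1 ∧ (α = [] → αT = []) := by
  induction h with
  | nil q => exact ⟨[], NT.FinRun.nil _, fun _ => rfl⟩
  | @cons q q' q'' a u α ht hr ih =>
      obtain ⟨αT, hrT, himp⟩ := ih
      refine ⟨T.out q.1 a q'.1 ++ αT, NT.FinRun.cons ((TF_trans T).1 ht).1 hrT, ?_⟩
      intro hc
      have h1 : (TF T).out q a q' = [] ∧ α = [] := by
        constructor
        · by_contra h2
          have := List.append_ne_nil_of_left_ne_nil h2 α
          exact this hc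
        · rcases List.append_eq_nil_iff.1 hc with ⟨_, h3⟩
          exact h3
      have h2 : q.1 ∉ BSet T := by
        intro hB
        exact outF_ne_nil T hB h1.1
      have h3 : T.out q.1 a q'.1 = [] := by
        have h4 : (TF T).out q a q' = outF T q.1 q.2.val a q'.1 := rfl
        rw [h4, outF, if_neg h2] at h1
        exact h1.1
      rw [h3, himp h1.2]
      rfl

lemma TF_finRun_B_start {s s' : (TF T).Q} {u : List A} {α : List B}
    (h : (TF T).FinRun s u α s') (hB : s.1 ∈ BSet T) (hu : u ≠ []) : α ≠ [] := by
  cases h with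
  | nil => exact absurd rfl hu
  | cons ht hr =>
      intro hc
      exact outF_ne_nil T hB (List.append_eq_nil_iff.1 hc).1

lemma TF_productive {f : (ℕ → A) → Option (ℕ → B)} (hCl : T.Clean) (hTr : T.Trim)
    (hT : T.Computes f) (hcont : ContinuousPartial f) : (TF T).Productive := by
  intro q₁ q₂ q₁' q₂' u u' α₁ α₁' α₂ α₂' h1I h2I h1F hu' hr1 hl1 hr2 hl2
  by_cases hB : q₂'.1 ∈ BSet T
  · exact TF_finRun_B_start T hl2 hB hu'
  · intro hα
    obtain ⟨αT1, hT1, _⟩ := TF_finRun_proj T hr1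
    obtain ⟨αT1', hTl1, _⟩ := TF_finRun_proj T hl1
    obtain ⟨αT2, hT2, _⟩ := TF_finRun_proj T hr2
    obtain ⟨αT2', hTl2, hε⟩ := TF_finRun_proj T hl2
    rw [hε hα] at hTl2
    exact hB (danger T hCl hTr hT hcont ((TF_I T).1 h1I).1 ((TF_I T).1 h2I).1
      ((TF_F T).1 h1F) hu' hT1 hTl1 hT2 hTl2)

end Aux
namespace Aux
variable {A B : Type}

/-- occurs on some accepting run -/
def OccAcc (S : NT A B) (s : S.Q) : Prop := ∃ x ρ, S.Accepting x ρ ∧ ∃ i, ρ i = s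

/-- restriction of a transducer to the states occurring on accepting runs -/
noncomputable def trimNT (S : NT A B) : NT A B where
  Q := {s : S.Q // OccAcc S s}
  fin := @Subtype.fintype _ _ (fun _ => Classical.propDecidable _) S.fin
  I := {s | s.val ∈ S.I}
  F := {s | s.val ∈ S.F}
  trans := fun s a s' => S.trans s.val a s'.val
  out := fun s a s' => S.out s.val a s'.val

lemma trimNT_isRun {S : NT A B} {x : ℕ → A} {ρ : ℕ → (trimNT S).Q}
    (h : (trimNT S).IsRun x ρ) : S.IsRun x (fun i => (ρ i).val) :=
  fun i => h i

lemma trimNT_accepting {S : NT A B} {x : ℕ → A} {ρ : ℕ → (trimNT S).Q}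
    (h : (trimNT S).Accepting x ρ) : S.Accepting x (fun i => (ρ i).val) := by
  refine ⟨trimNT_isRun h.1, h.2.1, ?_⟩
  intro i
  obtain ⟨j, hj1, hj2⟩ := h.2.2 i
  exact ⟨j, hj1, hj2⟩

lemma trimNT_outPrefix {S : NT A B} (x : ℕ → A) (ρ : ℕ → (trimNT S).Q) (n : ℕ) :
    (trimNT S).outPrefix x ρ n = S.outPrefix x (fun i => (ρ i).val) n := rfl

/-- lift an accepting run of `S` into `trimNT S` -/
lemma trimNT_lift {S : NT A B} {x : ℕ → A} {ρ : ℕ → S.Q} (h : S.Accepting x ρ) :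
    ∃ ρ' : ℕ → (trimNT S).Q, (∀ i, (ρ' i).val = ρ i) ∧ (trimNT S).Accepting x ρ' := by
  refine ⟨fun i => ⟨ρ i, ⟨x, ρ, h, i, rfl⟩⟩, fun i => rfl, ?_, ?_, ?_⟩
  · intro i
    exact h.1 i
  · exact h.2.1
  · intro i
    obtain ⟨j, hj1, hj2⟩ := h.2.2 i
    exact ⟨j, hj1, hj2⟩

lemma trimNT_trim (S : NT A B) : (trimNT S).Trim := by
  rintro ⟨s, hs⟩
  obtain ⟨x, ρ, hacc, i, hi⟩ := hs
  obtain ⟨ρ', hval, hacc'⟩ := trimNT_lift hacc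
  exact ⟨x, ρ', hacc', i, Subtype.ext (by rw [hval i, hi])⟩

lemma trimNT_unambiguous {S : NT A B} (h : S.Unambiguous) : (trimNT S).Unambiguous := by
  intro x ρ₁ ρ₂ h1 h2
  have e := h x _ _ (trimNT_accepting h1) (trimNT_accepting h2)
  funext n
  exact Subtype.ext (congrFun e n)

lemma trimNT_clean {S : NT A B} (h : S.Clean) : (trimNT S).Clean := by
  intro x ρ hacc
  intro m
  obtain ⟨n, hn⟩ := h x _ (trimNT_accepting hacc) m
  exact ⟨n, by rwa [trimNT_outPrefix]⟩

lemma trimNT_computes {S : NT A B} {f : (ℕ → A) → Option (ℕ → B)} (h : S.Computes f) :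
    (trimNT S).Computes f := by
  intro x y
  rw [h x y]
  constructor
  · rintro ⟨ρ, hacc, hinf, hout⟩
    obtain ⟨ρ', hval, hacc'⟩ := trimNT_lift hacc
    have he : (fun i => (ρ' i).val) = ρ := funext hval
    refine ⟨ρ', hacc', ?_, ?_⟩
    · intro m
      obtain ⟨n, hn⟩ := hinf m
      exact ⟨n, by rw [trimNT_outPrefix, he]; exact hn⟩
    · intro n
      rw [trimNT_outPrefix, he]
      exact hout n
  · rintro ⟨ρ, hacc, hinf, hout⟩
    refine ⟨fun i => (ρ i).val, trimNT_accepting hacc, ?_, ?_⟩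
    · intro m
      obtain ⟨n, hn⟩ := hinf m
      exact ⟨n, by rwa [trimNT_outPrefix] at hn⟩
    · intro n
      rw [← trimNT_outPrefix]
      exact hout n

lemma trimNT_finRun {S : NT A B} {s s' : (trimNT S).Q} {u : List A} {α : List B}
    (h : (trimNT S).FinRun s u α s') : S.FinRun s.val u α s'.val := by
  induction h with
  | nil q => exact NT.FinRun.nil _
  | cons ht hr ih => exact NT.FinRun.cons ht ih

lemma trimNT_productive {S : NT A B} (h : S.Productive) : (trimNT S).Productive := by
  intro q₁ q₂ q₁' q₂' u u' α₁ α₁' α₂ α₂' h1I h2I h1F hu' hr1 hl1 hr2 hl2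
  exact h q₁.val q₂.val q₁'.val q₂'.val u u' α₁ α₁' α₂ α₂' h1I h2I h1F hu'
    (trimNT_finRun hr1) (trimNT_finRun hl1) (trimNT_finRun hr2) (trimNT_finRun hl2)

end Aux

/-- Every unambiguous, clean and trim 1-nT computing a continuous function is
equivalent to an unambiguous, clean, trim and productive 1-nT. -/
theorem exists_productive_equivalent
    {A B : Type} [Fintype A] [Fintype B]
    (T : NT A B) (f : (ℕ → A) → Option (ℕ → B))
    (hU : T.Unambiguous) (hCl : T.Clean) (hTr : T.Trim)
    (hT : T.Computes f) (hcont : ContinuousPartial f) :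
    ∃ T' : NT A B, T'.Unambiguous ∧ T'.Clean ∧ T'.Trim ∧ T'.Productive ∧
      T'.Computes f := by
  classical
  by_cases hQ : Nonempty T.Q
  · obtain ⟨q0⟩ := hQ
    obtain ⟨x0, ρ0, hacc0, _⟩ := hTr q0
    haveI : Inhabited A := ⟨x0 0⟩
    have hinf0 := hCl x0 ρ0 hacc0
    obtain ⟨n0, hn0⟩ := hinf0 1
    haveI : Inhabited B := ⟨(T.outPrefix x0 ρ0 n0)[0]'(by omega)⟩
    exact ⟨Aux.trimNT (Aux.TF T),
      Aux.trimNT_unambiguous (Aux.TF_unambiguous T hU),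
      Aux.trimNT_clean (Aux.TF_clean T hTr hCl),
      Aux.trimNT_trim _,
      Aux.trimNT_productive (Aux.TF_productive T hCl hTr hT hcont),
      Aux.trimNT_computes (Aux.TF_computes T hTr hCl hT)⟩
  · refine ⟨T, hU, hCl, hTr, ?_, hT⟩
    intro q₁ q₂ q₁' q₂' u u' α₁ α₁' α₂ α₂' _ _ _ _ _ _ _ _
    exact absurd ⟨q₁⟩ hQ
end

section
/- Let T be an unambiguous, clean and trim 1-nT computing a continuous partial function f : A^ω ⇀ B^ω. Then for every initial step (J,u,C), the values val(q) for q ∈ C are pairwise mutual prefixes: for all p,q ∈ C, either val(p) is a prefix of val(q) or val(q) is a prefix of val(p). -/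
namespace NT

variable {A B : Type}

/-- A compatible set of states: a common infinite future, one branch of which is final. -/
def Compatible (T : NT A B) (C : Set T.Q) : Prop :=
  ∃ (x : ℕ → A) (ρ : T.Q → ℕ → T.Q),
    (∀ q ∈ C, ρ q 0 = q ∧ T.IsRun x (ρ q)) ∧ ∃ q ∈ C, T.Final (ρ q)

/-- `(C,u,D)` is a pre-step, with predecessor map `pre` and outputs `val`. -/
def PreStepOn (T : NT A B) (C : Set T.Q) (u : List A) (D : Set T.Q)
    (pre : T.Q → T.Q) (val : T.Q → List B) : Prop :=
  T.Compatible C ∧ T.Compatible D ∧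
  (∀ q ∈ D, pre q ∈ C ∧ T.FinRun (pre q) u (val q) q) ∧
  (∀ q ∈ D, ∀ p ∈ C, (∃ α, T.FinRun p u α q) → p = pre q)

/-- `(C,u,D)` is a step: a pre-step with surjective predecessor map. -/
def StepOn (T : NT A B) (C : Set T.Q) (u : List A) (D : Set T.Q)
    (pre : T.Q → T.Q) (val : T.Q → List B) : Prop :=
  T.PreStepOn C u D pre val ∧ ∀ p ∈ C, ∃ q ∈ D, pre q = p

/-- `(J,u,C)` is an initial step. -/
def InitStepOn (T : NT A B) (J : Set T.Q) (u : List A) (C : Set T.Q)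
    (pre : T.Q → T.Q) (val : T.Q → List B) : Prop :=
  J ⊆ T.I ∧ T.StepOn J u C pre val

/-- `com` is the longest common prefix of the `val q` (`q ∈ C`) and
`adv q` is the advance of `q`, i.e. `val q = com ++ adv q`. -/
def AdvData (T : NT A B) (C : Set T.Q) (val : T.Q → List B)
    (com : List B) (adv : T.Q → List B) : Prop :=
  (∀ q ∈ C, val q = com ++ adv q) ∧
  (∀ c : List B, (∀ q ∈ C, c <+: val q) → c <+: com)

end NT

section Helpers

variable {A B : Type} {T : NT A B}

lemma listPrepend_nil {C : Type} (x : ℕ → C) : listPrepend [] x = x := by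
  funext i; simp [listPrepend]

lemma listPrepend_cons_zero {C : Type} (a : C) (u : List C) (x : ℕ → C) :
    listPrepend (a :: u) x 0 = a := by simp [listPrepend]

lemma listPrepend_cons_succ {C : Type} (a : C) (u : List C) (x : ℕ → C) (i : ℕ) :
    listPrepend (a :: u) x (i + 1) = listPrepend u x i := by
  simp only [listPrepend, List.length_cons]
  by_cases h : i < u.length
  · simp [Nat.succ_lt_succ h, h]
  · have : ¬ (i + 1 < u.length + 1) := by omega
    simp [h, this]

lemma outPrefix_zero (x : ℕ → A) (σ : ℕ → T.Q) : T.outPrefix x σ 0 = [] := by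
  simp [NT.outPrefix]

lemma outPrefix_succ_head (x : ℕ → A) (σ : ℕ → T.Q) (n : ℕ) :
    T.outPrefix x σ (n + 1) =
      T.out (σ 0) (x 0) (σ 1) ++ T.outPrefix (fun i => x (i + 1)) (fun i => σ (i + 1)) n := by
  simp only [NT.outPrefix, List.range_succ_eq_map, List.map_cons, List.map_map, List.flatten_cons]
  rfl

lemma outPrefix_prefix (x : ℕ → A) (σ : ℕ → T.Q) {m n : ℕ} (h : m ≤ n) :
    T.outPrefix x σ m <+: T.outPrefix x σ n := by
  refine ⟨((List.range (n - m)).map (fun i => T.out (σ (m + i)) (x (m + i)) (σ (m + i + 1)))).flatten, ?_⟩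
  have hn : n = m + (n - m) := by omega
  rw [hn]
  simp only [NT.outPrefix, List.range_add, List.map_append, List.map_map, List.flatten_append]
  have h2 : m + (n - m) - m = n - m := by omega
  rw [h2]
  rfl

end Helpers
section Helpers2

variable {A B : Type} {T : NT A B}

lemma PrefixOf.mono {l₁ l₂ : List B} {y : ℕ → B} (hp : l₁ <+: l₂) (h : PrefixOf l₂ y) :
    PrefixOf l₁ y := by
  intro i hi
  have h2 := h i (lt_of_lt_of_le hi hp.length_le)
  simp only [List.get_eq_getElem] at *
  rw [hp.getElem hi, h2]

lemma PrefixOf.prefix_of_le {l₁ l₂ : List B} {y : ℕ → B} (h₁ : PrefixOf l₁ y)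
    (h₂ : PrefixOf l₂ y) (hle : l₁.length ≤ l₂.length) : l₁ <+: l₂ := by
  have heq : l₁ = l₂.take l₁.length := by
    apply List.ext_getElem
    · simp; omega
    · intro i h1 h2
      rw [List.getElem_take]
      have e1 := h₁ i h1
      have e2 := h₂ i (by omega)
      simp only [List.get_eq_getElem] at e1 e2
      rw [e1, e2]
  rw [heq]; exact List.take_prefix _ _

lemma PrefixOf.mutual {l₁ l₂ : List B} {y : ℕ → B} (h₁ : PrefixOf l₁ y)
    (h₂ : PrefixOf l₂ y) : l₁ <+: l₂ ∨ l₂ <+: l₁ := by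
  rcases le_total l₁.length l₂.length with h | h
  · exact Or.inl (h₁.prefix_of_le h₂ h)
  · exact Or.inr (h₂.prefix_of_le h₁ h)

lemma exists_outEq (x : ℕ → A) (σ : ℕ → T.Q) (hinf : T.InfiniteOutput x σ) :
    ∃ y : ℕ → B, T.OutEq x σ y := by
  have hlen : ∀ i : ℕ, ∃ n, i < (T.outPrefix x σ n).length := by
    intro i
    obtain ⟨n, hn⟩ := hinf (i + 1)
    exact ⟨n, by omega⟩
  choose nf hnf using hlen
  refine ⟨fun i => (T.outPrefix x σ (nf i))[i]'(hnf i), ?_⟩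
  intro n i hi
  simp only [List.get_eq_getElem]
  rcases le_total n (nf i) with h | h
  · exact (outPrefix_prefix x σ h).getElem hi
  · exact ((outPrefix_prefix x σ h).getElem (hnf i)).symm

lemma f_some {f : (ℕ → A) → Option (ℕ → B)} (hT : T.Computes f) (hCl : T.Clean)
    {x : ℕ → A} {σ : ℕ → T.Q} (hacc : T.Accepting x σ) :
    ∃ y, f x = some y ∧ T.OutEq x σ y := by
  have hinf := hCl x σ hacc
  obtain ⟨y, hy⟩ := exists_outEq x σ hinf
  exact ⟨y, (hT x y).mpr ⟨σ, hacc, hinf, hy⟩, hy⟩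

lemma NT.FinRun.append_run {q q' q'' : T.Q} {u v : List A} {α β : List B}
    (h1 : T.FinRun q u α q') (h2 : T.FinRun q' v β q'') :
    T.FinRun q (u ++ v) (α ++ β) q'' := by
  induction h1 with
  | nil => simpa using h2
  | cons ht hrest ih =>
    rw [List.cons_append, List.append_assoc]
    exact NT.FinRun.cons ht (ih h2)

lemma finRun_prefix (x : ℕ → A) (ρ : ℕ → T.Q) (hr : T.IsRun x ρ) (m : ℕ) :
    T.FinRun (ρ 0) ((List.range m).map x) (T.outPrefix x ρ m) (ρ m) := by
  induction m generalizing x ρ with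
  | zero => rw [outPrefix_zero]; simpa using NT.FinRun.nil (ρ 0)
  | succ m ih =>
    rw [outPrefix_succ_head, List.range_succ_eq_map, List.map_cons, List.map_map]
    have := ih (fun i => x (i + 1)) (fun i => ρ (i + 1)) (fun i => hr (i + 1))
    exact NT.FinRun.cons (hr 0) this

lemma final_of_shift {ρ σ : ℕ → T.Q} {d : ℕ} (hρ : T.Final ρ)
    (hs : ∀ k, σ (d + k) = ρ k) : T.Final σ := by
  intro i
  obtain ⟨j, hij, hF⟩ := hρ i
  exact ⟨d + j, by omega, by rw [hs]; exact hF⟩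

lemma final_tail {τ : ℕ → T.Q} (hτ : T.Final τ) (i : ℕ) : T.Final (fun k => τ (i + k)) := by
  intro j
  obtain ⟨k, hk, hF⟩ := hτ (i + j)
  refine ⟨k - i, by omega, ?_⟩
  have : i + (k - i) = k := by omega
  simp only [this]
  exact hF

lemma prepend_run {q q' : T.Q} {u : List A} {α : List B}
    (h : T.FinRun q u α q') (x : ℕ → A) (ρ : ℕ → T.Q)
    (h0 : ρ 0 = q') (hr : T.IsRun x ρ) :
    ∃ σ : ℕ → T.Q, σ 0 = q ∧ T.IsRun (listPrepend u x) σ ∧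
      (∀ k, σ (u.length + k) = ρ k) ∧
      (∀ m, T.outPrefix (listPrepend u x) σ (u.length + m) = α ++ T.outPrefix x ρ m) := by
  induction h with
  | nil q =>
    refine ⟨ρ, h0, ?_, fun k => by simp, fun m => ?_⟩
    · rw [listPrepend_nil]; exact hr
    · simp [listPrepend_nil]
  | @cons p p' p'' a v β ht hrest ih =>
    obtain ⟨σ', hσ'0, hσ'run, hσ'shift, hσ'out⟩ := ih h0
    refine ⟨fun i => match i with | 0 => p | (i + 1) => σ' i, rfl, ?_, ?_, ?_⟩
    · intro i
      match i with
      | 0 =>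
        rw [listPrepend_cons_zero]
        show T.trans p a (σ' 0)
        rw [hσ'0]; exact ht
      | (i + 1) =>
        rw [listPrepend_cons_succ]
        exact hσ'run i
    · intro k
      have : (a :: v).length + k = (v.length + k) + 1 := by simp; omega
      rw [this]
      exact hσ'shift k
    · intro m
      have hl : (a :: v).length + m = (v.length + m) + 1 := by simp; omega
      rw [hl, outPrefix_succ_head]
      have hx : (fun i => listPrepend (a :: v) x (i + 1)) = listPrepend v x := by
        funext i; exact listPrepend_cons_succ a v x i
      show T.out p (listPrepend (a :: v) x 0) (σ' 0) ++
          T.outPrefix (fun i => listPrepend (a :: v) x (i + 1)) σ' (v.length + m) = _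
      rw [hx, listPrepend_cons_zero, hσ'out m, hσ'0, List.append_assoc]

end Helpers2
/-- The outputs along the runs of an initial step are mutual prefixes. -/
theorem initial_step_mutual_prefixes
    {A B : Type} [Fintype A] [Fintype B]
    (T : NT A B) (f : (ℕ → A) → Option (ℕ → B))
    (hU : T.Unambiguous) (hCl : T.Clean) (hTr : T.Trim)
    (hT : T.Computes f) (hcont : ContinuousPartial f)
    (J : Set T.Q) (u : List A) (C : Set T.Q)
    (pre : T.Q → T.Q) (val : T.Q → List B)
    (hstep : T.InitStepOn J u C pre val) :
    ∀ p ∈ C, ∀ q ∈ C, val p <+: val q ∨ val q <+: val p := by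
  obtain ⟨hJI, ⟨⟨hcompJ, hcompC, hrun, huniq⟩, hsurj⟩⟩ := hstep
  obtain ⟨x, ρ, hρ, q₀, hq₀C, hfin⟩ := hcompC
  suffices H : ∃ y₀ : ℕ → B, ∀ r ∈ C, PrefixOf (val r) y₀ by
    obtain ⟨y₀, hy⟩ := H
    intro p hp q hq
    exact (hy p hp).mutual (hy q hq)
  obtain ⟨σ₀, hσ00, hσ0run, hσ0shift, hσ0out⟩ :=
    prepend_run (hrun q₀ hq₀C).2 x (ρ q₀) (hρ q₀ hq₀C).1 (hρ q₀ hq₀C).2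
  have hacc₀ : T.Accepting (listPrepend u x) σ₀ :=
    ⟨hσ0run, by rw [hσ00]; exact hJI (hrun q₀ hq₀C).1, final_of_shift hfin hσ0shift⟩
  obtain ⟨y₀, hf₀, hout₀⟩ := f_some hT hCl hacc₀
  refine ⟨y₀, fun r hr => ?_⟩
  obtain ⟨m, hm⟩ := hcont (listPrepend u x) y₀ hf₀ (val r).length
  obtain ⟨z, τ, hτacc, i, hτi⟩ := hTr (ρ r m)
  have hτ'run : T.IsRun (fun k => z (i + k)) (fun k => τ (i + k)) := fun k => hτacc.1 (i + k)
  have hτ'fin : T.Final (fun k => τ (i + k)) := final_tail hτacc.2.2 i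
  have hτ'0 : (fun k => τ (i + k)) 0 = ρ r m := by simpa using hτi
  have hfinr := finRun_prefix x (ρ r) (hρ r hr).2 m
  rw [(hρ r hr).1] at hfinr
  have hcompR := (hrun r hr).2.append_run hfinr
  obtain ⟨σ, hσ0, hσrun, hσshift, hσout⟩ :=
    prepend_run hcompR (fun k => z (i + k)) (fun k => τ (i + k)) hτ'0 hτ'run
  have hacc : T.Accepting (listPrepend (u ++ (List.range m).map x) (fun k => z (i + k))) σ :=
    ⟨hσrun, by rw [hσ0]; exact hJI (hrun r hr).1, final_of_shift hτ'fin hσshift⟩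
  obtain ⟨ym, hfm, houtm⟩ := f_some hT hCl hacc
  have hagree : ∀ j, j < m →
      listPrepend u x j = listPrepend (u ++ (List.range m).map x) (fun k => z (i + k)) j := by
    intro j hj
    have hlen : (u ++ (List.range m).map x).length = u.length + m := by simp
    have h2 : j < (u ++ (List.range m).map x).length := by omega
    by_cases hju : j < u.length
    · simp only [listPrepend, dif_pos hju, dif_pos h2, List.get_eq_getElem]
      exact (List.getElem_append_left ..).symm
    · simp only [listPrepend, dif_neg hju, dif_pos h2, List.get_eq_getElem]
      rw [List.getElem_append_right (by omega)]
      simp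
  have hcm := hm _ ym hfm hagree
  have hpref : PrefixOf (val r) ym := by
    have h1 := houtm ((u ++ (List.range m).map x).length + 0)
    rw [hσout 0, outPrefix_zero] at h1
    exact PrefixOf.mono (by simp) h1
  intro j hj
  rw [List.get_eq_getElem] at *
  rw [show (val r)[j] = ym j from by have := hpref j hj; simpa using this]
  exact (hcm j hj).symm
end

section
/- Let T be a 1-nT with state set Q. A set C ⊆ Q is compatible if and only if there exist a function d : C → Q and words u,u' ∈ A* such that: for all q ∈ C there are runs q →^u d(q) and d(q) →^{u'} d(q); there exists q ∈ C with d(q) ∈ F; and u' ≠ ε with |u| ≤ |Q|^{|Q|} and |u'| ≤ |Q|^{|Q|}. -/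
namespace NT

theorem finRun_of_steps (T : NT A B) :
    ∀ (n : ℕ) (x : ℕ → A) (g : ℕ → T.Q),
    (∀ i < n, T.trans (g i) (x i) (g (i+1))) →
    ∃ α, T.FinRun (g 0) (List.ofFn (fun i : Fin n => x i)) α (g n) := by
  intro n
  induction n with
  | zero => intro x g _; exact ⟨[], by simpa using FinRun.nil (T := T) (g 0)⟩
  | succ n ih =>
    intro x g h
    obtain ⟨α, hα⟩ := ih (fun i => x (i+1)) (fun i => g (i+1)) (fun i hi => h (i+1) (by omega))
    refine ⟨T.out (g 0) (x 0) (g 1) ++ α, ?_⟩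
    rw [List.ofFn_succ]
    exact FinRun.cons (h 0 (by omega)) hα

theorem steps_of_finRun (T : NT A B) {q q' : T.Q} {w : List A} {α : List B}
    (h : T.FinRun q w α q') :
    ∃ g : ℕ → T.Q, g 0 = q ∧ g w.length = q' ∧
      ∀ i, (hi : i < w.length) → T.trans (g i) (w[i]) (g (i+1)) := by
  induction h with
  | nil q => exact ⟨fun _ => q, rfl, rfl, fun i hi => absurd hi (by simp)⟩
  | @cons q q' q'' a u α h1 h2 ih =>
    obtain ⟨g, hg0, hg1, hg2⟩ := ih
    refine ⟨fun i => match i with | 0 => q | (i+1) => g i, rfl, hg1, ?_⟩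
    intro i hi
    match i with
    | 0 => simpa [hg0] using h1
    | (i+1) => exact hg2 i (by simpa using hi)

theorem shorten (T : NT A B) (C : Set T.Q) :
    ∀ (n : ℕ) (x : ℕ → A) (G : ℕ → T.Q → T.Q),
    (∀ i < n, ∀ q ∈ C, T.trans (G i q) (x i) (G (i+1) q)) →
    ∃ (n' : ℕ) (x' : ℕ → A) (G' : ℕ → T.Q → T.Q),
      n' ≤ Fintype.card T.Q ^ Fintype.card T.Q ∧ (0 < n → 0 < n') ∧
      G' 0 = G 0 ∧ G' n' = G n ∧
      ∀ i < n', ∀ q ∈ C, T.trans (G' i q) (x' i) (G' (i+1) q) := by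
  classical
  set N := Fintype.card T.Q ^ Fintype.card T.Q with hN
  intro n
  induction n using Nat.strong_induction_on with
  | _ n IH =>
  intro x G h
  by_cases hn : n ≤ N
  · exact ⟨n, x, G, hn, fun h => h, rfl, rfl, h⟩
  · push_neg at hn
    have hcard : Fintype.card (T.Q → T.Q) < Fintype.card (Fin (N+1)) := by
      simp [Fintype.card_fun, hN]
    obtain ⟨i₀, j₀, hne, heq⟩ :=
      Fintype.exists_ne_map_eq_of_card_lt (fun i : Fin (N+1) => G i.val) hcard
    obtain ⟨a, b, hab, hbN, hGab⟩ : ∃ a b : ℕ, a < b ∧ b ≤ N ∧ G a = G b := by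
      rcases lt_or_gt_of_ne (Fin.val_ne_of_ne hne) with hlt | hgt
      · exact ⟨i₀, j₀, hlt, by omega, heq⟩
      · exact ⟨j₀, i₀, hgt, by omega, heq.symm⟩
    have hmn : n - (b - a) < n := by omega
    have hsteps : ∀ k, k < n - (b - a) → ∀ q ∈ C,
        T.trans ((fun k => if k < a then G k else G (k + (b - a))) k q)
          ((fun k => if k < a then x k else x (k + (b - a))) k)
          ((fun k => if k < a then G k else G (k + (b - a))) (k+1) q) := by
      intro k hk q hq
      simp only []
      by_cases h' : k < a
      · by_cases h'' : k + 1 < a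
        · simpa [h', h''] using h k (by omega) q hq
        · have hk1 : k + 1 = a := by omega
          have e1 : G (k + 1 + (b - a)) = G (k+1) := by
            have : k + 1 + (b - a) = b := by omega
            rw [this, ← hGab, hk1]
          simpa [h', h'', e1] using h k (by omega) q hq
      · have e1 : ¬ (k + 1 < a) := by omega
        have e2 : k + 1 + (b - a) = k + (b - a) + 1 := by omega
        simp only [if_neg h', if_neg e1, e2]
        exact h (k + (b - a)) (by omega) q hq
    obtain ⟨n', x', G', hle, hpos, h0, hend, hst⟩ :=
      IH (n - (b - a)) hmn
        (fun k => if k < a then x k else x (k + (b - a)))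
        (fun k => if k < a then G k else G (k + (b - a)))
        hsteps
    refine ⟨n', x', G', hle, fun _ => hpos (by omega), ?_, ?_, hst⟩
    · rw [h0]
      by_cases h' : 0 < a
      · simp [h']
      · have ha : a = 0 := by omega
        have : (0:ℕ) + (b - a) = b := by omega
        simp [ha, this, ← hGab]
    · rw [hend]
      have h' : ¬ (n - (b - a) < a) := by omega
      have e : n - (b - a) + (b - a) = n := by omega
      simp [h', e]


end NT

/-- Pumping characterization of compatible sets. -/
theorem compatible_characterization
    {A B : Type} [Fintype A] [Fintype B]
    (T : NT A B) (C : Set T.Q) :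
    T.Compatible C ↔
    ∃ (d : T.Q → T.Q) (u u' : List A),
      (∀ q ∈ C, (∃ α, T.FinRun q u α (d q)) ∧ (∃ α', T.FinRun (d q) u' α' (d q))) ∧
      (∃ q ∈ C, d q ∈ T.F) ∧
      u' ≠ [] ∧
      u.length ≤ Fintype.card T.Q ^ Fintype.card T.Q ∧
      u'.length ≤ Fintype.card T.Q ^ Fintype.card T.Q := by
  classical
  constructor
  · rintro ⟨x, ρ, hρ, q₀, hq₀C, hfin⟩
    choose m hm1 hm2 using hfin
    set N := Fintype.card T.Q ^ Fintype.card T.Q with hN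
    -- a strictly increasing sequence of final positions
    let e : ℕ → ℕ := fun i => Nat.rec (m 0) (fun _ prev => m (prev + 1)) i
    have heF : ∀ i, ρ q₀ (e i) ∈ T.F := by
      intro i; cases i with
      | zero => exact hm2 0
      | succ i => exact hm2 (e i + 1)
    have hemono : StrictMono e := by
      apply strictMono_nat_of_lt_succ
      intro i
      have := hm1 (e i + 1)
      show e i < m (e i + 1)
      omega
    have hcard : Fintype.card (T.Q → T.Q) < Fintype.card (Fin (N+1)) := by
      simp [Fintype.card_fun, hN]
    obtain ⟨i₀, j₀, hne, heq⟩ :=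
      Fintype.exists_ne_map_eq_of_card_lt
        (fun i : Fin (N+1) => (fun q => ρ q (e i.val))) hcard
    obtain ⟨a, b, hab, haF, hGab⟩ :
        ∃ a b : ℕ, a < b ∧ ρ q₀ a ∈ T.F ∧ (fun q => ρ q a) = (fun q => ρ q b) := by
      rcases lt_or_gt_of_ne (Fin.val_ne_of_ne hne) with hlt | hgt
      · exact ⟨e i₀, e j₀, hemono hlt, heF i₀, heq⟩
      · exact ⟨e j₀, e i₀, hemono hgt, heF j₀, heq.symm⟩
    obtain ⟨nu, xu, Gu, hnu, _, hGu0, hGu1, hstu⟩ :=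
      T.shorten C a x (fun k q => ρ q k) (fun i _ q hq => (hρ q hq).2 i)
    obtain ⟨nv, xv, Gv, hnv, hposv, hGv0, hGv1, hstv⟩ :=
      T.shorten C (b - a) (fun k => x (a + k)) (fun k q => ρ q (a + k))
        (fun i _ q hq => (hρ q hq).2 (a + i))
    refine ⟨fun q => ρ q a, List.ofFn (fun i : Fin nu => xu i),
      List.ofFn (fun i : Fin nv => xv i), ?_, ⟨q₀, hq₀C, haF⟩, ?_, ?_, ?_⟩
    · intro q hq
      constructor
      · obtain ⟨α, hα⟩ :=
          T.finRun_of_steps nu xu (fun k => Gu k q) (fun i hi => hstu i hi q hq)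
        have e0 : Gu 0 q = q := by rw [hGu0]; exact (hρ q hq).1
        have e1 : Gu nu q = ρ q a := by rw [hGu1]
        rw [e0, e1] at hα
        exact ⟨α, hα⟩
      · obtain ⟨α, hα⟩ :=
          T.finRun_of_steps nv xv (fun k => Gv k q) (fun i hi => hstv i hi q hq)
        have e0 : Gv 0 q = ρ q a := by rw [hGv0]; rfl
        have e1 : Gv nv q = ρ q a := by
          rw [hGv1]
          show ρ q (a + (b - a)) = ρ q a
          have hb : a + (b - a) = b := by omega
          rw [hb]
          exact (congrFun hGab q).symm
        rw [e0, e1] at hα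
        exact ⟨α, hα⟩
    · have hnv0 : 0 < nv := hposv (by omega)
      intro h
      apply_fun List.length at h
      simp at h
      omega
    · simpa using hnu
    · simpa using hnv
  · rintro ⟨d, u, u', h1, ⟨q₀, hq₀, hq₀F⟩, hne, hu, hu'⟩
    have hn : 0 < u'.length := List.length_pos_iff.mpr hne
    have hgex : ∀ q, q ∈ C → ∃ g : ℕ → T.Q, g 0 = q ∧ g u.length = d q ∧
        ∀ i, (hi : i < u.length) → T.trans (g i) (u[i]) (g (i+1)) := fun q hq => by
      obtain ⟨α, hα⟩ := (h1 q hq).1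
      exact T.steps_of_finRun hα
    have hsex : ∀ q, q ∈ C → ∃ s : ℕ → T.Q, s 0 = d q ∧ s u'.length = d q ∧
        ∀ i, (hi : i < u'.length) → T.trans (s i) (u'[i]) (s (i+1)) := fun q hq => by
      obtain ⟨α, hα⟩ := (h1 q hq).2
      exact T.steps_of_finRun hα
    choose g hg0 hg1 hg2 using hgex
    choose s hs0 hs1 hs2 using hsex
    set L := u.length with hL
    set n := u'.length with hn'
    refine ⟨fun i => if h : i < L then u[i] else u'[(i - L) % n]'(Nat.mod_lt _ hn),
      fun q => if h : q ∈ C then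
        (fun i => if i < L then g q h i else s q h ((i - L) % n))
      else fun _ => q, ?_, ⟨q₀, hq₀, ?_⟩⟩
    · intro q hq
      have hsucc : ∀ k, s q hq ((k + 1) % n) = s q hq (k % n + 1) := by
        intro k
        have hr : k % n < n := Nat.mod_lt _ hn
        have hrep : k + 1 = (k % n + 1) + (k / n) * n := by
          have h1 := Nat.mod_add_div k n
          have h2 : k / n * n = n * (k / n) := Nat.mul_comm _ _
          omega
        rw [hrep, Nat.add_mul_mod_self_right]
        by_cases hc : k % n + 1 < n
        · rw [Nat.mod_eq_of_lt hc]
        · have hcn : k % n + 1 = n := by omega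
          rw [hcn, Nat.mod_self, hs0 q hq, ← hs1 q hq]
      constructor
      · simp only [dif_pos hq]
        by_cases hL0 : 0 < L
        · simp only [if_pos hL0]
          exact hg0 q hq
        · have h0 : L = 0 := by omega
          simp only [if_neg (by omega : ¬ (0:ℕ) < L)]
          rw [Nat.zero_sub, Nat.zero_mod, hs0 q hq, ← hg1 q hq, h0]
          exact hg0 q hq
      · intro i
        simp only [dif_pos hq]
        by_cases hi : i < L
        · have hx : (if h : i < L then u[i] else u'[(i - L) % n]'(Nat.mod_lt _ hn)) = u[i] :=
            dif_pos hi
          have hρ1 : (if i + 1 < L then g q hq (i+1) else s q hq ((i + 1 - L) % n))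
              = g q hq (i+1) := by
            by_cases hi1 : i + 1 < L
            · rw [if_pos hi1]
            · have hL1 : i + 1 = L := by omega
              rw [if_neg hi1, hL1, Nat.sub_self, Nat.zero_mod, hs0 q hq, ← hg1 q hq]
          rw [hx, if_pos hi, hρ1]
          exact hg2 q hq i hi
        · have hx : (if h : i < L then u[i] else u'[(i - L) % n]'(Nat.mod_lt _ hn))
              = u'[(i - L) % n]'(Nat.mod_lt _ hn) := dif_neg hi
          have hi1 : ¬ (i + 1 < L) := by omega
          have he : i + 1 - L = (i - L) + 1 := by omega
          rw [hx, if_neg hi, if_neg hi1, he, hsucc]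
          exact hs2 q hq _ (Nat.mod_lt _ hn)
    · intro i
      refine ⟨L + i * n, ?_, ?_⟩
      · have : i ≤ i * n := Nat.le_mul_of_pos_right i hn
        omega
      · simp only [dif_pos hq₀]
        have hge : ¬ (L + i * n < L) := by omega
        rw [if_neg hge, Nat.add_sub_cancel_left, Nat.mul_mod_left, hs0 q₀ hq₀]
        exact hq₀F
end
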